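/- arXiv:2402.01382 — 3 statements merged into one kernel-verified Lean document; each statement's English description precedes it below -/
import Mathlib

section
/- Let n, B be positive integers, γ > 0, δ ≥ 0, and let λ1 ≥ λ2 ≥ … ≥ λ_d > 0. Define η_*(γ, B, δ, λ1) := 1 + 2nB(λ1² + nδ)/(γλ1⁴) − (Σ_{i=2}^d λ_i²)/λ1² and γ̄ := 2nB(λ1² + nδ)/(λ1² Σ_{i=1}^d λ_i²). Then η_* is strictly increasing in δ and in B, strictly decreasing in γ; moreover, if γ < γ̄ (with λ2, …, λ_d held fixed), then η_* is strictly decreasing in λ1. -/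
open Finset

/-- Lower tail-index bound `η_* = 1 + 2nB(λ1² + nδ)/(γ λ1⁴) − S/λ1²`, where `S = Σ_{i=2}^d λ_i²`. -/
noncomputable def etaLow (n B : ℕ) (γ δ lam1 S : ℝ) : ℝ :=
  1 + 2 * n * B * (lam1 ^ 2 + n * δ) / (γ * lam1 ^ 4) - S / lam1 ^ 2

/-- Critical learning rate `γ̄ = 2nB(λ1² + nδ)/(λ1² T)`, where `T = Σ_{i=1}^d λ_i²`. -/
noncomputable def gammaBar (n B : ℕ) (δ lam1 T : ℝ) : ℝ :=
  2 * n * B * (lam1 ^ 2 + n * δ) / (lam1 ^ 2 * T)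

theorem tail_index_lower_bound_monotonicity (n d : ℕ) (hn : 0 < n) (hd : 0 < d)
    (lam : Fin d → ℝ) (hpos : ∀ i, 0 < lam i)
    (hdec : ∀ i j : Fin d, i ≤ j → lam j ≤ lam i) :
    -- strictly increasing in the regularization parameter δ
    (∀ (B : ℕ) (γ δ δ' : ℝ), 0 < B → 0 < γ → 0 ≤ δ → δ < δ' →
      etaLow n B γ δ (lam ⟨0, hd⟩) (∑ i ∈ univ.erase ⟨0, hd⟩, lam i ^ 2) <
        etaLow n B γ δ' (lam ⟨0, hd⟩) (∑ i ∈ univ.erase ⟨0, hd⟩, lam i ^ 2)) ∧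
    -- strictly increasing in the batch size B
    (∀ (B B' : ℕ) (γ δ : ℝ), 0 < B → B < B' → 0 < γ → 0 ≤ δ →
      etaLow n B γ δ (lam ⟨0, hd⟩) (∑ i ∈ univ.erase ⟨0, hd⟩, lam i ^ 2) <
        etaLow n B' γ δ (lam ⟨0, hd⟩) (∑ i ∈ univ.erase ⟨0, hd⟩, lam i ^ 2)) ∧
    -- strictly decreasing in the learning rate γ
    (∀ (B : ℕ) (γ γ' δ : ℝ), 0 < B → 0 < γ → γ < γ' → 0 ≤ δ →
      etaLow n B γ' δ (lam ⟨0, hd⟩) (∑ i ∈ univ.erase ⟨0, hd⟩, lam i ^ 2) <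
        etaLow n B γ δ (lam ⟨0, hd⟩) (∑ i ∈ univ.erase ⟨0, hd⟩, lam i ^ 2)) ∧
    -- strictly decreasing in λ1, with λ2, …, λ_d held fixed, provided γ < γ̄
    (∀ (B : ℕ) (γ δ mu mu' : ℝ), 0 < B → 0 < γ → 0 ≤ δ → 0 < mu →
      (∀ i : Fin d, 0 < i.1 → lam i ≤ mu) → mu < mu' →
      γ < gammaBar n B δ mu (mu ^ 2 + ∑ i ∈ univ.erase ⟨0, hd⟩, lam i ^ 2) →
      γ < gammaBar n B δ mu' (mu' ^ 2 + ∑ i ∈ univ.erase ⟨0, hd⟩, lam i ^ 2) →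
      etaLow n B γ δ mu' (∑ i ∈ univ.erase ⟨0, hd⟩, lam i ^ 2) <
        etaLow n B γ δ mu (∑ i ∈ univ.erase ⟨0, hd⟩, lam i ^ 2)) := by

  have hS0 : (0:ℝ) ≤ ∑ i ∈ univ.erase ⟨0, hd⟩, lam i ^ 2 :=
    Finset.sum_nonneg fun i _ => sq_nonneg _
  set S : ℝ := ∑ i ∈ univ.erase ⟨0, hd⟩, lam i ^ 2 with hSdef
  have hl1 : 0 < lam ⟨0, hd⟩ := hpos _
  have hnR : (0:ℝ) < n := by exact_mod_cast hn
  refine ⟨?_, ?_, ?_, ?_⟩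
  · intro B γ δ δ' hB hγ hδ hlt
    have hBR : (0:ℝ) < B := by exact_mod_cast hB
    simp only [etaLow]
    have hden : 0 < γ * lam ⟨0, hd⟩ ^ 4 := by positivity
    apply sub_lt_sub_right
    apply (add_lt_add_iff_left _).mpr
    apply div_lt_div_of_pos_right ?_ hden
    nlinarith [mul_pos (mul_pos (mul_pos two_pos hnR) hBR) (mul_pos hnR (sub_pos.mpr hlt))]
  · intro B B' γ δ hB hBB hγ hδ
    have hBR : (0:ℝ) < B := by exact_mod_cast hB
    have hBB' : (B:ℝ) < B' := by exact_mod_cast hBB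
    simp only [etaLow]
    have hden : 0 < γ * lam ⟨0, hd⟩ ^ 4 := by positivity
    apply sub_lt_sub_right
    apply (add_lt_add_iff_left _).mpr
    apply div_lt_div_of_pos_right ?_ hden
    have hpos2 : 0 < lam ⟨0, hd⟩ ^ 2 + n * δ := by positivity
    nlinarith [mul_pos (mul_pos (mul_pos two_pos hnR) (sub_pos.mpr hBB')) hpos2]
  · intro B γ γ' δ hB hγ hγγ hδ
    have hBR : (0:ℝ) < B := by exact_mod_cast hB
    simp only [etaLow]
    apply sub_lt_sub_right
    apply (add_lt_add_iff_left _).mpr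
    apply div_lt_div_of_pos_left
    · positivity
    · positivity
    · nlinarith [pow_pos hl1 4]
  · intro B γ δ mu mu' hB hγ hδ hmu hbound hlt hg1 hg2
    have hBR : (0:ℝ) < B := by exact_mod_cast hB
    have hmu' : 0 < mu' := hmu.trans hlt
    -- translate the gammaBar hypothesis at mu'
    have hT : 0 < mu' ^ 2 * (mu' ^ 2 + S) := by positivity
    rw [gammaBar, lt_div_iff₀ hT] at hg2
    -- hg2 : γ * (mu'^2 * (mu'^2 + S)) < 2*n*B*(mu'^2 + n*δ)
    simp only [etaLow]
    rw [sub_lt_sub_iff, ← sub_lt_sub_iff_left (1:ℝ)]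
    have key : 2 * n * B * (mu' ^ 2 + n * δ) / (γ * mu' ^ 4) - S / mu' ^ 2
        < 2 * n * B * (mu ^ 2 + n * δ) / (γ * mu ^ 4) - S / mu ^ 2 := by
      have e1 : ∀ m : ℝ, 0 < m →
          2 * (n:ℝ) * B * (m ^ 2 + n * δ) / (γ * m ^ 4) - S / m ^ 2
            = (2 * n * B * (m ^ 2 + n * δ) - γ * S * m ^ 2) / (γ * m ^ 4) := by
        intro m hm
        field_simp
      rw [e1 mu hmu, e1 mu' hmu']
      rw [div_lt_div_iff₀ (by positivity) (by positivity)]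
      have hNδ : 0 ≤ 2 * (n:ℝ) * B * ((n:ℝ) * δ) := by positivity
      have h2 : 0 < mu' ^ 2 - mu ^ 2 := by nlinarith
      have h1 : 0 < mu ^ 2 * (2 * (n:ℝ) * B * (mu' ^ 2 + n * δ) - γ * (mu' ^ 2 * (mu' ^ 2 + S))) :=
        mul_pos (pow_pos hmu 2) (sub_pos.mpr hg2)
      have t1 : 0 < γ * ((mu' ^ 2 - mu ^ 2) * (mu ^ 2 * (2 * (n:ℝ) * B * (mu' ^ 2 + n * δ) - γ * (mu' ^ 2 * (mu' ^ 2 + S))))) :=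
        mul_pos hγ (mul_pos h2 h1)
      have t2 : 0 < γ ^ 2 * ((mu' ^ 2 - mu ^ 2) * (mu ^ 2 * mu' ^ 4)) := by positivity
      have t3 : 0 ≤ γ * ((mu' ^ 2 - mu ^ 2) * (2 * (n:ℝ) * B * ((n:ℝ) * δ) * mu' ^ 2)) := by
        apply mul_nonneg hγ.le
        apply mul_nonneg h2.le
        positivity
      nlinarith [t1, t2, t3]
    linarith [key]
end

section
/- Let θ > 0, a > 0, Δ > 0 and μ ∈ ℝ, and define b(z) := −θ(z − μ) and σ̂(z) := √(2θa(z² + 1)) for z ∈ ℝ. Let S₁, S₂ be integrable real random variables on a common probability space with E[S₂ | S₁] = S₁ almost surely, and let W be a centered Gaussian random variable with variance Δ, independent of (S₁, S₂). Then for every convex function h : ℝ → ℝ that is bounded below (or such that both expectations are well-defined in (−∞, ∞]), E[h(S₁ + Δ·b(S₁) + σ̂(S₁)·W)] ≤ E[h(S₂ + Δ·b(S₂) + σ̂(S₂)·W)]. -/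
open MeasureTheory ProbabilityTheory Real
open scoped NNReal ENNReal

/-- For an even pair around `x`, a convex function's symmetric sum is monotone in spread. -/
lemma EM_even_mono {h : ℝ → ℝ} (hh : ConvexOn ℝ Set.univ h) {x u v : ℝ}
    (hu : 0 ≤ u) (huv : u ≤ v) :
    h (x + u) + h (x - u) ≤ h (x + v) + h (x - v) := by
  rcases eq_or_lt_of_le (hu.trans huv) with hv | hv
  · have : u = 0 := le_antisymm (huv.trans hv.symm.le) hu
    simp [this, ← hv]
  · set l : ℝ := (v + u) / (2 * v) with hl
    have hl0 : 0 ≤ l := by positivity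
    have hl1' : 0 ≤ 1 - l := by
      have : l ≤ 1 := by
        rw [hl, div_le_one (by positivity)]; linarith
      linarith
    have hsum : l + (1 - l) = 1 := by ring
    have hxu : x + u = l * (x + v) + (1 - l) * (x - v) := by
      rw [hl]; field_simp; ring
    have hxu' : x - u = (1 - l) * (x + v) + l * (x - v) := by
      rw [hl]; field_simp; ring
    have h1 := hh.2 (Set.mem_univ (x + v)) (Set.mem_univ (x - v)) hl0 hl1' hsum
    have h2 := hh.2 (Set.mem_univ (x + v)) (Set.mem_univ (x - v)) hl1' hl0 (by ring)
    simp only [smul_eq_mul] at h1 h2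
    rw [← hxu] at h1
    have h2' : h (x - u) ≤ (1 - l) * h (x + v) + l * h (x - v) := by
      rw [hxu']; exact h2
    nlinarith [h1, h2']

/-- Key pointwise convexity inequality for the symmetrized Euler–Maruyama step. -/
lemma EM_key {h : ℝ → ℝ} (hh : ConvexOn ℝ Set.univ h)
    {t r x₁ x₂ y y₁ y₂ w : ℝ} (ht : 0 ≤ t) (hr : 0 ≤ r) (htr : t + r = 1)
    (hy : 0 ≤ y) (hy1 : 0 ≤ y₁) (hy2 : 0 ≤ y₂) (hyle : y ≤ t * y₁ + r * y₂)
    (hw : 0 ≤ w) :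
    h (t * x₁ + r * x₂ + y * w) + h (t * x₁ + r * x₂ - y * w)
      ≤ t * (h (x₁ + y₁ * w) + h (x₁ - y₁ * w))
        + r * (h (x₂ + y₂ * w) + h (x₂ - y₂ * w)) := by
  set x := t * x₁ + r * x₂
  have step1 : h (x + y * w) + h (x - y * w)
      ≤ h (x + (t * y₁ + r * y₂) * w) + h (x - (t * y₁ + r * y₂) * w) :=
    EM_even_mono hh (by positivity) (by nlinarith)
  have e1 : x + (t * y₁ + r * y₂) * w = t * (x₁ + y₁ * w) + r * (x₂ + y₂ * w) := by ring
  have e2 : x - (t * y₁ + r * y₂) * w = t * (x₁ - y₁ * w) + r * (x₂ - y₂ * w) := by ring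
  have h1 := hh.2 (Set.mem_univ (x₁ + y₁ * w)) (Set.mem_univ (x₂ + y₂ * w)) ht hr htr
  have h2 := hh.2 (Set.mem_univ (x₁ - y₁ * w)) (Set.mem_univ (x₂ - y₂ * w)) ht hr htr
  simp only [smul_eq_mul] at h1 h2
  rw [e1, e2] at step1
  linarith

/-- Convexity of `s ↦ √(s² + 1)`. -/
lemma EM_sqrt_convex {t r s₁ s₂ : ℝ} (ht : 0 ≤ t) (hr : 0 ≤ r) (htr : t + r = 1) :
    Real.sqrt ((t * s₁ + r * s₂) ^ 2 + 1)
      ≤ t * Real.sqrt (s₁ ^ 2 + 1) + r * Real.sqrt (s₂ ^ 2 + 1) := by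
  have key : ∀ s : ℝ, Real.sqrt (s ^ 2 + 1) = ‖(Complex.ofReal s + Complex.ofReal 1 * Complex.I)‖ := by
    intro s
    rw [Complex.norm_add_mul_I]
    norm_num
  rw [key, key, key]
  have htr' : (t : ℂ) + (r : ℂ) = 1 := by exact_mod_cast htr
  have heq : Complex.ofReal (t * s₁ + r * s₂) + Complex.ofReal 1 * Complex.I
      = (t : ℂ) * (Complex.ofReal s₁ + Complex.ofReal 1 * Complex.I)
        + (r : ℂ) * (Complex.ofReal s₂ + Complex.ofReal 1 * Complex.I) := by
    push_cast
    linear_combination (-Complex.I) * htr'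
  rw [heq]
  calc ‖((t : ℂ) * (Complex.ofReal s₁ + Complex.ofReal 1 * Complex.I)
        + (r : ℂ) * (Complex.ofReal s₂ + Complex.ofReal 1 * Complex.I))‖
      ≤ ‖((t : ℂ) * (Complex.ofReal s₁ + Complex.ofReal 1 * Complex.I))‖
        + ‖((r : ℂ) * (Complex.ofReal s₂ + Complex.ofReal 1 * Complex.I))‖ :=
        norm_add_le _ _
    _ = t * ‖(Complex.ofReal s₁ + Complex.ofReal 1 * Complex.I)‖
        + r * ‖(Complex.ofReal s₂ + Complex.ofReal 1 * Complex.I)‖ := by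
        rw [norm_mul, norm_mul, Complex.norm_real, Complex.norm_real, Real.norm_eq_abs, Real.norm_eq_abs,
          abs_of_nonneg ht, abs_of_nonneg hr]

/-- Lipschitz property of `s ↦ √(s² + 1)`. -/
lemma EM_sqrt_lip (s s' : ℝ) :
    |Real.sqrt (s ^ 2 + 1) - Real.sqrt (s' ^ 2 + 1)| ≤ |s - s'| := by
  have key : ∀ u : ℝ, Real.sqrt (u ^ 2 + 1) = ‖(Complex.ofReal u + Complex.ofReal 1 * Complex.I)‖ := by
    intro u
    rw [Complex.norm_add_mul_I]; norm_num
  rw [key, key]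
  have h1 : (Complex.ofReal s + Complex.ofReal 1 * Complex.I)
      - (Complex.ofReal s' + Complex.ofReal 1 * Complex.I) = ((s - s' : ℝ) : ℂ) := by
    push_cast; ring
  calc |‖(Complex.ofReal s + Complex.ofReal 1 * Complex.I)‖
        - ‖(Complex.ofReal s' + Complex.ofReal 1 * Complex.I)‖|
      ≤ ‖((Complex.ofReal s + Complex.ofReal 1 * Complex.I)
        - (Complex.ofReal s' + Complex.ofReal 1 * Complex.I))‖ :=
        abs_norm_sub_norm_le _ _
    _ = |s - s'| := by rw [h1, Complex.norm_real, Real.norm_eq_abs]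


/-- Every convex function on `ℝ` admits a monotone subgradient selection. -/
lemma EM_subgradient {g : ℝ → ℝ} (hg : ConvexOn ℝ Set.univ g) :
    ∃ d : ℝ → ℝ, Monotone d ∧ (∀ x y, g x + d x * (y - x) ≤ g y) ∧
      (∀ x, g x - g (x - 1) ≤ d x ∧ d x ≤ g (x + 1) - g x) := by
  classical
  set sl : ℝ → ℝ → ℝ := fun x y => (g y - g x) / (y - x) with hsl
  have hmono : ∀ x y z : ℝ, y ≠ x → z ≠ x → y ≤ z → sl x y ≤ sl x z := by
    intro x y z hy hz hyz
    exact hg.secant_mono trivial trivial trivial hy hz hyz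
  set d : ℝ → ℝ := fun x => sInf (sl x '' Set.Ioi x) with hd
  have hne : ∀ x : ℝ, (sl x '' Set.Ioi x).Nonempty := fun x =>
    ⟨sl x (x + 1), ⟨x + 1, by simp, rfl⟩⟩
  have hlb : ∀ x y : ℝ, y < x → sl x y ∈ lowerBounds (sl x '' Set.Ioi x) := by
    intro x y hyx
    rintro _ ⟨z, hz, rfl⟩
    exact hmono x y z hyx.ne (ne_of_gt hz) (hyx.le.trans (le_of_lt hz))
  have hbdd : ∀ x : ℝ, BddBelow (sl x '' Set.Ioi x) := fun x =>
    ⟨sl x (x - 1), hlb x (x - 1) (by linarith)⟩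
  have hle : ∀ x z : ℝ, x < z → d x ≤ sl x z := fun x z hz =>
    csInf_le (hbdd x) ⟨z, hz, rfl⟩
  have hge : ∀ x y : ℝ, y < x → sl x y ≤ d x := fun x y hy =>
    le_csInf (hne x) (hlb x y hy)
  have hsub : ∀ x y, g x + d x * (y - x) ≤ g y := by
    intro x y
    rcases lt_trichotomy x y with hxy | rfl | hxy
    · have h1 := hle x y hxy
      have hpos : 0 < y - x := by linarith
      rw [show sl x y = (g y - g x)/(y - x) from rfl, le_div_iff₀ hpos] at h1
      linarith
    · simp
    · have h1 := hge x y hxy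
      have hneg : y - x < 0 := by linarith
      rw [show sl x y = (g y - g x)/(y - x) from rfl, div_le_iff_of_neg hneg] at h1
      linarith
  refine ⟨d, ?_, hsub, fun x => ⟨?_, ?_⟩⟩
  · intro x x' hxx'
    rcases eq_or_lt_of_le hxx' with rfl | hlt
    · exact le_refl _
    · have h1 : d x ≤ sl x x' := hle x x' hlt
      have h2 : sl x' x ≤ d x' := hge x' x hlt
      have h3 : sl x x' = sl x' x := by
        show (g x' - g x) / (x' - x) = (g x - g x') / (x - x')
        rw [div_eq_div_iff (by simpa using sub_ne_zero.mpr hlt.ne') (by simpa using sub_ne_zero.mpr hlt.ne)]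
        ring
      calc d x ≤ sl x x' := h1
        _ = sl x' x := h3
        _ ≤ d x' := h2
  · have h1 := hge x (x - 1) (by linarith)
    have h2 : sl x (x - 1) = g x - g (x - 1) := by
      show (g (x - 1) - g x) / (x - 1 - x) = g x - g (x - 1)
      rw [show x - 1 - x = -1 by ring]
      field_simp
      ring
    rwa [h2] at h1
  · have h1 := hle x (x + 1) (by linarith)
    have h2 : sl x (x + 1) = g (x + 1) - g x := by
      show (g (x + 1) - g x) / (x + 1 - x) = g (x + 1) - g x
      simp
    rwa [h2] at h1



lemma EM_integrable_id {v : ℝ≥0} (hv : v ≠ 0) :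
    Integrable (fun x : ℝ => x) (gaussianReal 0 v) := by
  rw [gaussianReal_of_var_ne_zero 0 hv]
  rw [integrable_withDensity_iff (measurable_gaussianPDF 0 v)
    (Filter.Eventually.of_forall fun _ => ENNReal.ofReal_lt_top)]
  have hv0 : 0 < (v : ℝ) := by positivity
  set b : ℝ := (2 * (v : ℝ))⁻¹ with hbdef
  set c : ℝ := (√(2 * π * v))⁻¹ with hcdef
  have hc0 : 0 ≤ c := by positivity
  have hb : 0 < b := by positivity
  have hint : Integrable (fun x : ℝ => c * |x * Real.exp (-b * x ^ 2)|) volume :=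
    ((integrable_mul_exp_neg_mul_sq hb).abs).const_mul c
  apply Integrable.mono' hint
  · exact (measurable_id.mul
      (measurable_gaussianPDF 0 v).ennreal_toReal).aestronglyMeasurable
  · refine Filter.Eventually.of_forall fun x => ?_
    have hpdf : (gaussianPDF 0 v x).toReal = c * Real.exp (-b * x ^ 2) := by
      have harg : -(x - 0) ^ 2 / (2 * (v : ℝ)) = -b * x ^ 2 := by
        rw [hbdef]; field_simp; ring
      rw [gaussianPDF_def, ENNReal.toReal_ofReal (gaussianPDFReal_nonneg 0 v x),
        gaussianPDFReal_def]
      show (√(2 * π * (v:ℝ)))⁻¹ * rexp (-(x - 0) ^ 2 / (2 * (v:ℝ))) = c * rexp (-b * x ^ 2)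
      rw [harg, hcdef]
    rw [Real.norm_eq_abs, hpdf]
    rw [show x * (c * Real.exp (-b * x ^ 2)) = c * (x * Real.exp (-b * x ^ 2)) by ring]
    rw [abs_mul, abs_of_nonneg hc0]

lemma EM_approx {h : ℝ → ℝ} (hh : ConvexOn ℝ Set.univ h) {c : ℝ} (hc : ∀ x, c ≤ h x) :
    ∃ g : ℕ → ℝ → ℝ, (∀ n, ConvexOn ℝ Set.univ (g n)) ∧ (∀ n x, c ≤ g n x) ∧
      (∀ n : ℕ, LipschitzWith (n : ℝ≥0) (g n)) ∧ (∀ n x, g n x ≤ h x) ∧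
      (∀ z, (⨆ n : ℕ, ENNReal.ofReal (g n z - c)) = ENNReal.ofReal (h z - c)) ∧
      (∀ x, Monotone fun n : ℕ => g n x) := by
  classical
  set g : ℕ → ℝ → ℝ := fun n x => ⨅ y : ℝ, (h y + n * |x - y|) with hgdef
  have hbdd : ∀ (n : ℕ) (x : ℝ), BddBelow (Set.range fun y : ℝ => h y + n * |x - y|) := by
    intro n x
    refine ⟨c, ?_⟩
    rintro _ ⟨y, rfl⟩
    have h1 := hc y
    have h2 : (0:ℝ) ≤ n * |x - y| := by positivity
    simp only
    linarith
  have hcle : ∀ n x, c ≤ g n x := by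
    intro n x
    refine le_ciInf fun y => ?_
    have h1 := hc y
    have h2 : (0:ℝ) ≤ n * |x - y| := by positivity
    linarith
  have hleh : ∀ n x, g n x ≤ h x := by
    intro n x
    have := ciInf_le (hbdd n x) x
    simpa using this
  have hkey : ∀ (n : ℕ) (x x' : ℝ), g n x ≤ g n x' + n * |x - x'| := by
    intro n x x'
    have : g n x - n * |x - x'| ≤ g n x' := by
      refine le_ciInf fun y => ?_
      have h1 : g n x ≤ h y + n * |x - y| := ciInf_le (hbdd n x) y
      have h2 : |x - y| ≤ |x' - y| + |x - x'| := by
        calc |x - y| = |(x - x') + (x' - y)| := by ring_nf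
          _ ≤ |x - x'| + |x' - y| := abs_add_le _ _
          _ = |x' - y| + |x - x'| := by ring
      have h3 : (n:ℝ) * |x - y| ≤ n * |x' - y| + n * |x - x'| := by
        have := mul_le_mul_of_nonneg_left h2 (by positivity : (0:ℝ) ≤ n)
        linarith [this]
      linarith
    linarith
  have hlip : ∀ n : ℕ, LipschitzWith n (g n) := by
    intro n
    refine LipschitzWith.of_dist_le_mul fun x x' => ?_
    rw [Real.dist_eq, Real.dist_eq]
    rw [abs_sub_le_iff]
    constructor
    · have := hkey n x x'
      push_cast
      linarith
    · have := hkey n x' x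
      rw [abs_sub_comm x' x] at this
      push_cast
      linarith
  have hconv : ∀ n : ℕ, ConvexOn ℝ Set.univ (g n) := by
    intro n
    refine ⟨convex_univ, fun x₁ _ x₂ _ t r ht hr htr => ?_⟩
    simp only [smul_eq_mul]
    refine le_of_forall_pos_le_add fun ε hε => ?_
    have hx₁ : g n x₁ < g n x₁ + ε := by linarith
    have hx₂ : g n x₂ < g n x₂ + ε := by linarith
    obtain ⟨y₁, hy₁⟩ := exists_lt_of_ciInf_lt hx₁
    obtain ⟨y₂, hy₂⟩ := exists_lt_of_ciInf_lt hx₂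
    have step : g n (t * x₁ + r * x₂) ≤ h (t * y₁ + r * y₂)
        + n * |t * x₁ + r * x₂ - (t * y₁ + r * y₂)| := ciInf_le (hbdd n _) _
    have habs : |t * x₁ + r * x₂ - (t * y₁ + r * y₂)| ≤ t * |x₁ - y₁| + r * |x₂ - y₂| := by
      calc |t * x₁ + r * x₂ - (t * y₁ + r * y₂)| = |t * (x₁ - y₁) + r * (x₂ - y₂)| := by ring_nf
        _ ≤ |t * (x₁ - y₁)| + |r * (x₂ - y₂)| := abs_add_le _ _
        _ = t * |x₁ - y₁| + r * |x₂ - y₂| := by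
            rw [abs_mul, abs_mul, abs_of_nonneg ht, abs_of_nonneg hr]
    have hh2 := hh.2 (Set.mem_univ y₁) (Set.mem_univ y₂) ht hr htr
    simp only [smul_eq_mul] at hh2
    have hn0 : (0:ℝ) ≤ n := by positivity
    have : g n (t * x₁ + r * x₂)
        ≤ t * (h y₁ + n * |x₁ - y₁|) + r * (h y₂ + n * |x₂ - y₂|) := by
      refine step.trans ?_
      have := mul_le_mul_of_nonneg_left habs hn0
      nlinarith [this, hh2]
    have h1 : t * (h y₁ + n * |x₁ - y₁|) ≤ t * (g n x₁ + ε) :=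
      mul_le_mul_of_nonneg_left hy₁.le ht
    have h2 : r * (h y₂ + n * |x₂ - y₂|) ≤ r * (g n x₂ + ε) :=
      mul_le_mul_of_nonneg_left hy₂.le hr
    calc g n (t * x₁ + r * x₂) ≤ t * (g n x₁ + ε) + r * (g n x₂ + ε) := by linarith
      _ = t * g n x₁ + r * g n x₂ + ε := by linear_combination ε * htr
  obtain ⟨d, _, hdsub, _⟩ := EM_subgradient hh
  have hattain : ∀ (x : ℝ) (n : ℕ), |d x| ≤ n → g n x = h x := by
    intro x n hn
    refine le_antisymm (hleh n x) (le_ciInf fun y => ?_)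
    have h1 := hdsub x y
    have h2 : -(n * |x - y|) ≤ d x * (y - x) := by
      have : |d x * (y - x)| ≤ n * |x - y| := by
        rw [abs_mul, abs_sub_comm x y]
        exact mul_le_mul_of_nonneg_right hn (abs_nonneg _)
      linarith [neg_abs_le (d x * (y - x))]
    linarith
  have hmon : ∀ x, Monotone fun n : ℕ => g n x := by
    intro x n m hnm
    refine ciInf_mono (hbdd n x) fun y => ?_
    have : (n:ℝ) ≤ (m:ℝ) := by exact_mod_cast hnm
    have h0 : (0:ℝ) ≤ |x - y| := abs_nonneg _
    nlinarith
  refine ⟨g, hconv, hcle, hlip, hleh, fun z => ?_, hmon⟩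
  apply le_antisymm
  · exact iSup_le fun n => ENNReal.ofReal_le_ofReal (by linarith [hleh n z])
  · have hN : |d z| ≤ (⌈|d z|⌉₊ : ℝ) := Nat.le_ceil _
    have := hattain z ⌈|d z|⌉₊ hN
    rw [← this]
    exact le_iSup (fun n : ℕ => ENNReal.ofReal (g n z - c)) ⌈|d z|⌉₊

theorem EM_main_lipschitz {Ω : Type*} [MeasureSpace Ω]
    [IsProbabilityMeasure (ℙ : Measure Ω)]
    (θ a Δ μ : ℝ) (hθ : 0 < θ) (ha : 0 < a) (hΔ : 0 < Δ)
    (S₁ S₂ W : Ω → ℝ)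
    (hS₁ : Measurable S₁) (hS₂ : Measurable S₂) (hW : Measurable W)
    (hS₁int : Integrable S₁ ℙ) (hS₂int : Integrable S₂ ℙ)
    (hmart : ℙ[S₂ | MeasurableSpace.comap S₁ Real.measurableSpace] =ᵐ[ℙ] S₁)
    (hgauss : Measure.map W ℙ = gaussianReal 0 Δ.toNNReal)
    (hindep : IndepFun (fun ω => (S₁ ω, S₂ ω)) W ℙ)
    (h : ℝ → ℝ) (hconv : ConvexOn ℝ Set.univ h) (c : ℝ) (hc : ∀ x, c ≤ h x)
    (L : ℝ≥0) (hL : LipschitzWith L h) :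
    ∫⁻ ω, ENNReal.ofReal
        (h (S₁ ω + Δ * (-θ * (S₁ ω - μ)) +
          Real.sqrt (2 * θ * a * ((S₁ ω) ^ 2 + 1)) * W ω) - c) ∂ℙ ≤
      ∫⁻ ω, ENNReal.ofReal
        (h (S₂ ω + Δ * (-θ * (S₂ ω - μ)) +
          Real.sqrt (2 * θ * a * ((S₂ ω) ^ 2 + 1)) * W ω) - c) ∂ℙ := by
  classical
  -- basic notation
  set v : ℝ≥0 := Δ.toNNReal with hvdef
  have hv : v ≠ 0 := by
    simp only [hvdef, ne_eq, Real.toNNReal_eq_zero, not_le]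
    exact hΔ
  set γ : Measure ℝ := gaussianReal 0 v with hγdef
  set A : ℝ → ℝ := fun s => s + Δ * (-θ * (s - μ)) with hAdef
  set σf : ℝ → ℝ := fun s => Real.sqrt (2 * θ * a * (s ^ 2 + 1)) with hσdef
  set f : ℝ → ℝ → ℝ := fun s w => h (A s + σf s * w) with hfdef
  set K : ℝ := Real.sqrt (2 * θ * a) with hKdef
  have hK0 : 0 ≤ K := Real.sqrt_nonneg _
  have hσ_eq : ∀ s, σf s = K * Real.sqrt (s ^ 2 + 1) := fun s =>
    Real.sqrt_mul (by positivity) _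
  have hσ0 : ∀ s, 0 ≤ σf s := fun s => Real.sqrt_nonneg _
  have hσconv : ∀ t r s₁ s₂ : ℝ, 0 ≤ t → 0 ≤ r → t + r = 1 →
      σf (t * s₁ + r * s₂) ≤ t * σf s₁ + r * σf s₂ := by
    intro t r s₁ s₂ ht hr htr
    rw [hσ_eq, hσ_eq, hσ_eq]
    have := EM_sqrt_convex (s₁ := s₁) (s₂ := s₂) ht hr htr
    nlinarith [this, hK0]
  have hσlip : ∀ s s' : ℝ, |σf s - σf s'| ≤ K * |s - s'| := by
    intro s s'
    rw [hσ_eq, hσ_eq, ← mul_sub, abs_mul, abs_of_nonneg hK0]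
    exact mul_le_mul_of_nonneg_left (EM_sqrt_lip s s') hK0
  have hAaff : ∀ t r s₁ s₂ : ℝ, t + r = 1 →
      A (t * s₁ + r * s₂) = t * A s₁ + r * A s₂ := by
    intro t r s₁ s₂ htr
    simp only [hAdef]
    have hr' : r = 1 - t := by linarith
    subst hr'
    ring
  have hLreal : ∀ z z' : ℝ, |h z - h z'| ≤ L * |z - z'| := by
    intro z z'
    have := hL.dist_le_mul z z'
    rwa [Real.dist_eq, Real.dist_eq] at this
  have hL0 : (0:ℝ) ≤ L := L.coe_nonneg
  -- continuity and measurability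
  have hAcont : Continuous A := by fun_prop
  have hσcont : Continuous σf := by
    apply Real.continuous_sqrt.comp
    fun_prop
  have hfcont : Continuous fun p : ℝ × ℝ => f p.1 p.2 := by
    apply hL.continuous.comp
    exact ((hAcont.comp continuous_fst).add ((hσcont.comp continuous_fst).mul continuous_snd))
  have hfcont1 : ∀ s, Continuous fun w => f s w := fun s =>
    hfcont.comp (Continuous.prodMk_right s)
  -- gaussian facts
  have hsym : Measure.map (fun w : ℝ => -w) γ = γ := by
    have hfun : (fun w : ℝ => -w) = (fun w : ℝ => (-1 : ℝ) * w) := by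
      funext w; ring
    rw [hγdef, hfun]
    have := gaussianReal_map_const_mul (μ := 0) (v := v) (-1)
    rw [show ((-1 : ℝ) * ·) = fun w : ℝ => (-1 : ℝ) * w from rfl] at this
    rw [this]
    congr 1
    · ring
    · ext
      norm_num
  have hmp : MeasurePreserving (fun w : ℝ => -w) γ γ := ⟨measurable_neg, hsym⟩
  have hWintγ : Integrable (fun w : ℝ => w) γ := EM_integrable_id hv
  have habsγ : Integrable (fun w : ℝ => |w|) γ := hWintγ.abs
  set M : ℝ := ∫ w, |w| ∂γ with hMdef
  have hM0 : 0 ≤ M := integral_nonneg fun w => abs_nonneg w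
  -- integrability of f s
  have hfint : ∀ s, Integrable (fun w => f s w) γ := by
    intro s
    refine Integrable.mono' ((integrable_const (|h 0| + L * |A s|)).add
      ((habsγ.const_mul (L * σf s)))) ((hfcont1 s).aestronglyMeasurable) ?_
    refine Filter.Eventually.of_forall fun w => ?_
    rw [Real.norm_eq_abs]
    have h1 : |f s w - h 0| ≤ L * |A s + σf s * w| := by
      have := hLreal (A s + σf s * w) 0
      simpa using this
    have h2 : |A s + σf s * w| ≤ |A s| + σf s * |w| := by
      calc |A s + σf s * w| ≤ |A s| + |σf s * w| := abs_add_le _ _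
        _ = |A s| + σf s * |w| := by rw [abs_mul, abs_of_nonneg (hσ0 s)]
    have h3 : |f s w| ≤ |h 0| + L * |A s + σf s * w| := by
      have := abs_sub_abs_le_abs_sub (f s w) (h 0)
      linarith
    have h4 : (L:ℝ) * (|A s| + σf s * |w|) = L * |A s| + L * σf s * |w| := by ring
    have h5 := mul_le_mul_of_nonneg_left h2 hL0
    simp only [Pi.add_apply]
    linarith
  set g : ℝ → ℝ := fun s => ∫ w, f s w ∂γ with hgdef
  have hfnegint : ∀ s, Integrable (fun w => f s (-w)) γ := fun s =>
    (hmp.integrable_comp ((hfcont1 s).aestronglyMeasurable)).2 (hfint s)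
  have hgneg : ∀ s, g s = ∫ w, f s (-w) ∂γ := by
    intro s
    have heq := integral_map (μ := γ) measurable_neg.aemeasurable
      ((hfcont1 s).aestronglyMeasurable)
    rw [hsym] at heq
    exact heq
  have h2g : ∀ s, g s + g s = ∫ w, (f s w + f s (-w)) ∂γ := by
    intro s
    rw [integral_add (hfint s) (hfnegint s)]
    nth_rewrite 2 [hgneg s]
    rfl
  -- convexity of g
  have hgconv : ConvexOn ℝ Set.univ g := by
    refine ⟨convex_univ, fun s₁ _ s₂ _ t r ht hr htr => ?_⟩
    simp only [smul_eq_mul]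
    set s : ℝ := t * s₁ + r * s₂ with hsdef
    have hAeq : A s = t * A s₁ + r * A s₂ := hAaff t r s₁ s₂ htr
    have key' : ∀ w : ℝ, 0 ≤ w →
        f s w + f s (-w) ≤ t * (f s₁ w + f s₁ (-w)) + r * (f s₂ w + f s₂ (-w)) := by
      intro w hw
      have hy : σf s ≤ t * σf s₁ + r * σf s₂ := hσconv t r s₁ s₂ ht hr htr
      have hk := EM_key hconv (x₁ := A s₁) (x₂ := A s₂) (y := σf s) (y₁ := σf s₁)
        (y₂ := σf s₂) ht hr htr (hσ0 s) (hσ0 s₁) (hσ0 s₂) hy hw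
      simp only [hfdef]
      rw [hAeq]
      simpa only [mul_neg, ← sub_eq_add_neg] using hk
    have key : ∀ w : ℝ,
        f s w + f s (-w) ≤ t * (f s₁ w + f s₁ (-w)) + r * (f s₂ w + f s₂ (-w)) := by
      intro w
      rcases le_total 0 w with hw | hw
      · exact key' w hw
      · have := key' (-w) (neg_nonneg.2 hw)
        rw [neg_neg] at this
        linarith
    have hint1 : Integrable (fun w => f s w + f s (-w)) γ := (hfint s).add (hfnegint s)
    have hint2 : Integrable
        (fun w => t * (f s₁ w + f s₁ (-w)) + r * (f s₂ w + f s₂ (-w))) γ :=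
      (((hfint s₁).add (hfnegint s₁)).const_mul t).add
        (((hfint s₂).add (hfnegint s₂)).const_mul r)
    have hmono := integral_mono hint1 hint2 key
    rw [← h2g s] at hmono
    have hRHS : ∫ w, (t * (f s₁ w + f s₁ (-w)) + r * (f s₂ w + f s₂ (-w))) ∂γ
        = t * (g s₁ + g s₁) + r * (g s₂ + g s₂) := by
      have hi1 : Integrable (fun w => t * (f s₁ w + f s₁ (-w))) γ :=
        ((hfint s₁).add (hfnegint s₁)).const_mul t
      have hi2 : Integrable (fun w => r * (f s₂ w + f s₂ (-w))) γ :=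
        ((hfint s₂).add (hfnegint s₂)).const_mul r
      rw [integral_add hi1 hi2, integral_const_mul, integral_const_mul, ← h2g s₁, ← h2g s₂]
    rw [hRHS] at hmono
    linarith
  -- Lipschitz-type bound for g
  set Ca : ℝ := |1 - Δ * θ| with hCadef
  have hCa0 : 0 ≤ Ca := abs_nonneg _
  set Kg : ℝ := L * Ca + L * K * M with hKgdef
  have hKg0 : 0 ≤ Kg := by positivity
  have hAlip : ∀ s s' : ℝ, |A s - A s'| = Ca * |s - s'| := by
    intro s s'
    rw [hCadef, ← abs_mul]
    congr 1
    simp only [hAdef]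
    ring
  have hflip : ∀ s s' w : ℝ, |f s w - f s' w| ≤ L * Ca * |s - s'| + L * K * |s - s'| * |w| := by
    intro s s' w
    have h1 : |f s w - f s' w| ≤ L * |(A s + σf s * w) - (A s' + σf s' * w)| := hLreal _ _
    have h2 : |(A s + σf s * w) - (A s' + σf s' * w)| ≤ |A s - A s'| + |σf s - σf s'| * |w| := by
      calc |(A s + σf s * w) - (A s' + σf s' * w)| = |(A s - A s') + (σf s - σf s') * w| := by
            ring_nf
        _ ≤ |A s - A s'| + |(σf s - σf s') * w| := abs_add_le _ _
        _ = |A s - A s'| + |σf s - σf s'| * |w| := by rw [abs_mul]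
    have h3 := hσlip s s'
    have h4 := hAlip s s'
    nlinarith [mul_le_mul_of_nonneg_left h2 hL0, abs_nonneg w,
      mul_le_mul_of_nonneg_right h3 (abs_nonneg w), abs_nonneg (s - s')]
  have hgLip : ∀ s s' : ℝ, |g s - g s'| ≤ Kg * |s - s'| := by
    intro s s'
    have hsub : g s - g s' = ∫ w, (f s w - f s' w) ∂γ := by
      rw [integral_sub (hfint s) (hfint s')]
    have habs : |∫ w, (f s w - f s' w) ∂γ| ≤ ∫ w, |f s w - f s' w| ∂γ := by
      simpa [Real.norm_eq_abs] using
        norm_integral_le_integral_norm (μ := γ) (f := fun w => f s w - f s' w)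
    have hbint : Integrable (fun w => L * Ca * |s - s'| + L * K * |s - s'| * |w|) γ :=
      (integrable_const _).add (habsγ.const_mul _)
    have hmono : ∫ w, |f s w - f s' w| ∂γ
        ≤ ∫ w, (L * Ca * |s - s'| + L * K * |s - s'| * |w|) ∂γ :=
      integral_mono ((hfint s).sub (hfint s')).abs hbint (fun w => hflip s s' w)
    have hcalc : ∫ w, (L * Ca * |s - s'| + L * K * |s - s'| * |w|) ∂γ
        = L * Ca * |s - s'| + L * K * |s - s'| * M := by
      rw [integral_add (integrable_const _) (habsγ.const_mul _), integral_const,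
        integral_const_mul, probReal_univ]
      simp [hMdef]
    rw [hsub]
    rw [hcalc] at hmono
    have : (L:ℝ) * Ca * |s - s'| + L * K * |s - s'| * M = Kg * |s - s'| := by
      rw [hKgdef]; ring
    linarith
  have hglip' : LipschitzWith (Real.toNNReal Kg) g := by
    refine LipschitzWith.of_dist_le_mul fun s s' => ?_
    rw [Real.dist_eq, Real.dist_eq]
    have h1 := hgLip s s'
    have h2 : Kg ≤ (Real.toNNReal Kg : ℝ) := Real.le_coe_toNNReal Kg
    nlinarith [abs_nonneg (s - s')]
  have hgcont : Continuous g := hglip'.continuous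
  have hgc : ∀ s, c ≤ g s := by
    intro s
    have : ∫ (_ : ℝ), c ∂γ ≤ ∫ w, f s w ∂γ :=
      integral_mono (integrable_const c) (hfint s) fun w => hc _
    rwa [integral_const, probReal_univ, one_smul] at this
  -- Fubini reduction via independence
  have hΦmeas : Measurable fun p : ℝ × ℝ => ENNReal.ofReal (f p.1 p.2 - c) :=
    ((hfcont.sub continuous_const).measurable).ennreal_ofReal
  have hred : ∀ (S : Ω → ℝ), Measurable S → IndepFun S W ℙ →
      ∫⁻ ω, ENNReal.ofReal (f (S ω) (W ω) - c) ∂ℙ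
        = ∫⁻ ω, ENNReal.ofReal (g (S ω) - c) ∂ℙ := by
    intro S hS hSW
    have hmap : Measure.map (fun ω => (S ω, W ω)) ℙ = (Measure.map S ℙ).prod γ := by
      rw [← hgauss]
      exact (indepFun_iff_map_prod_eq_prod_map_map hS.aemeasurable hW.aemeasurable).1 hSW
    haveI : IsProbabilityMeasure (Measure.map S ℙ) := Measure.isProbabilityMeasure_map hS.aemeasurable
    have h1 : ∫⁻ ω, ENNReal.ofReal (f (S ω) (W ω) - c) ∂ℙ
        = ∫⁻ p, ENNReal.ofReal (f p.1 p.2 - c) ∂((Measure.map S ℙ).prod γ) := by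
      rw [← hmap, lintegral_map hΦmeas (hS.prodMk hW)]
    have hinner : ∀ x : ℝ, ∫⁻ w, ENNReal.ofReal (f x w - c) ∂γ = ENNReal.ofReal (g x - c) := by
      intro x
      have hI : Integrable (fun w => f x w - c) γ := by
        exact (hfint x).sub (integrable_const c)
      rw [← ofReal_integral_eq_lintegral_ofReal hI
        (Filter.Eventually.of_forall fun w => sub_nonneg.2 (hc _))]
      congr 1
      rw [integral_sub (hfint x) (integrable_const c), integral_const, probReal_univ,
        one_smul]
    have h2 : ∫⁻ p, ENNReal.ofReal (f p.1 p.2 - c) ∂((Measure.map S ℙ).prod γ)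
        = ∫⁻ x, ENNReal.ofReal (g x - c) ∂(Measure.map S ℙ) := by
      rw [lintegral_prod _ hΦmeas.aemeasurable]
      exact lintegral_congr fun x => hinner x
    have h3 : ∫⁻ x, ENNReal.ofReal (g x - c) ∂(Measure.map S ℙ)
        = ∫⁻ ω, ENNReal.ofReal (g (S ω) - c) ∂ℙ :=
      lintegral_map ((hgcont.sub continuous_const).measurable).ennreal_ofReal hS
    rw [h1, h2, h3]
  have hiW1 : IndepFun S₁ W ℙ := by
    have := hindep.comp (measurable_fst : Measurable (Prod.fst : ℝ × ℝ → ℝ))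
      (measurable_id : Measurable (id : ℝ → ℝ))
    exact this
  have hiW2 : IndepFun S₂ W ℙ := by
    have := hindep.comp (measurable_snd : Measurable (Prod.snd : ℝ × ℝ → ℝ))
      (measurable_id : Measurable (id : ℝ → ℝ))
    exact this
  have hgoal1 : ∫⁻ ω, ENNReal.ofReal
      (h (S₁ ω + Δ * (-θ * (S₁ ω - μ)) +
        Real.sqrt (2 * θ * a * ((S₁ ω) ^ 2 + 1)) * W ω) - c) ∂ℙ
      = ∫⁻ ω, ENNReal.ofReal (f (S₁ ω) (W ω) - c) ∂ℙ := rfl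
  have hgoal2 : ∫⁻ ω, ENNReal.ofReal
      (h (S₂ ω + Δ * (-θ * (S₂ ω - μ)) +
        Real.sqrt (2 * θ * a * ((S₂ ω) ^ 2 + 1)) * W ω) - c) ∂ℙ
      = ∫⁻ ω, ENNReal.ofReal (f (S₂ ω) (W ω) - c) ∂ℙ := rfl
  rw [hgoal1, hgoal2, hred S₁ hS₁ hiW1, hred S₂ hS₂ hiW2]
  -- integrability of g ∘ Sᵢ
  have hgS : ∀ (S : Ω → ℝ), Measurable S → Integrable S ℙ →
      Integrable (fun ω => g (S ω)) ℙ := by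
    intro S hS hSint
    refine Integrable.mono' ((integrable_const (|g 0|)).add ((hSint.abs).const_mul Kg))
      ((hgcont.measurable.comp hS).aestronglyMeasurable) ?_
    refine Filter.Eventually.of_forall fun ω => ?_
    rw [Real.norm_eq_abs]
    have h1 := hgLip (S ω) 0
    rw [sub_zero] at h1
    have h2 := abs_sub_abs_le_abs_sub (g (S ω)) (g 0)
    simp only [Pi.add_apply]
    linarith
  have hgS₁ := hgS S₁ hS₁ hS₁int
  have hgS₂ := hgS S₂ hS₂ hS₂int
  -- reduce lintegral comparison to integral comparison
  suffices hkey : ∫ ω, g (S₁ ω) ∂ℙ ≤ ∫ ω, g (S₂ ω) ∂ℙ by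
    have hI₁ : Integrable (fun ω => g (S₁ ω) - c) ℙ := by
      exact hgS₁.sub (integrable_const c)
    have hI₂ : Integrable (fun ω => g (S₂ ω) - c) ℙ := by
      exact hgS₂.sub (integrable_const c)
    rw [← ofReal_integral_eq_lintegral_ofReal hI₁
        (Filter.Eventually.of_forall fun ω => sub_nonneg.2 (hgc _)),
      ← ofReal_integral_eq_lintegral_ofReal hI₂
        (Filter.Eventually.of_forall fun ω => sub_nonneg.2 (hgc _))]
    apply ENNReal.ofReal_le_ofReal
    rw [integral_sub hgS₁ (integrable_const c), integral_sub hgS₂ (integrable_const c)]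
    linarith
  -- martingale step via subgradient
  set m : MeasurableSpace Ω := MeasurableSpace.comap S₁ Real.measurableSpace with hmdef
  have hm : m ≤ _ := hS₁.comap_le
  obtain ⟨d, hdmono, hdsub, hdbd⟩ := EM_subgradient hgconv
  have hdK : ∀ x, |d x| ≤ Kg := by
    intro x
    obtain ⟨hlo, hhi⟩ := hdbd x
    have h1 := hgLip (x + 1) x
    have h2 := hgLip x (x - 1)
    rw [show x + 1 - x = (1:ℝ) by ring, abs_one, mul_one] at h1
    rw [show x - (x - 1) = (1:ℝ) by ring, abs_one, mul_one] at h2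
    rw [abs_le]
    constructor
    · have := abs_le.1 h2
      linarith [this.1]
    · have := abs_le.1 h1
      linarith [(abs_le.1 h1).1]
  have hdmeas : Measurable d := hdmono.measurable
  set f₀ : Ω → ℝ := fun ω => d (S₁ ω) with hf₀def
  have hS₁m : Measurable[m] S₁ := Measurable.of_comap_le le_rfl
  have hf₀m : StronglyMeasurable[m] f₀ :=
    (hdmeas.comp hS₁m).stronglyMeasurable
  have hf₀bd : ∀ ω, ‖f₀ ω‖ ≤ Kg := fun ω => by
    rw [Real.norm_eq_abs]; exact hdK _
  have hf₀aesm := (hf₀m.mono hm).aestronglyMeasurable (μ := ℙ)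
  have hf₀S₂ : Integrable (f₀ * S₂) ℙ := hS₂int.bdd_mul hf₀aesm (c := Kg) (Filter.Eventually.of_forall hf₀bd)
  have hf₀S₁ : Integrable (f₀ * S₁) ℙ := hS₁int.bdd_mul hf₀aesm (c := Kg) (Filter.Eventually.of_forall hf₀bd)
  have hf₀diff : Integrable (fun ω => f₀ ω * (S₂ ω - S₁ ω)) ℙ :=
    (hS₂int.sub hS₁int).bdd_mul hf₀aesm (c := Kg) (Filter.Eventually.of_forall hf₀bd)
  have hcond : (MeasureTheory.condExp m ℙ (f₀ * S₂)) =ᵐ[ℙ] f₀ * (MeasureTheory.condExp m ℙ S₂) :=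
    condExp_mul_of_stronglyMeasurable_left hf₀m hf₀S₂ hS₂int
  have e1 : ∫ ω, (f₀ * S₂) ω ∂ℙ = ∫ ω, (f₀ * S₁) ω ∂ℙ := by
    calc ∫ ω, (f₀ * S₂) ω ∂ℙ = ∫ ω, ((MeasureTheory.condExp m ℙ (f₀ * S₂))) ω ∂ℙ := (integral_condExp hm).symm
      _ = ∫ ω, (f₀ * (MeasureTheory.condExp m ℙ S₂)) ω ∂ℙ := integral_congr_ae hcond
      _ = ∫ ω, (f₀ * S₁) ω ∂ℙ := by
          refine integral_congr_ae (hmart.mono fun ω hω => ?_)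
          simp only [Pi.mul_apply, hω]
  have hzero : ∫ ω, f₀ ω * (S₂ ω - S₁ ω) ∂ℙ = 0 := by
    have hfun : (fun ω => f₀ ω * (S₂ ω - S₁ ω))
        = fun ω => (f₀ * S₂) ω - (f₀ * S₁) ω := by
      funext ω; simp only [Pi.mul_apply]; ring
    have hI₂ : Integrable (fun ω => (f₀ * S₂) ω) ℙ := hf₀S₂
    have hI₁ : Integrable (fun ω => (f₀ * S₁) ω) ℙ := hf₀S₁
    rw [hfun, integral_sub hI₂ hI₁, e1, sub_self]
  have hpt : ∀ ω, g (S₁ ω) + f₀ ω * (S₂ ω - S₁ ω) ≤ g (S₂ ω) := fun ω =>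
    hdsub (S₁ ω) (S₂ ω)
  have hIadd : Integrable (fun ω => g (S₁ ω) + f₀ ω * (S₂ ω - S₁ ω)) ℙ := by
    exact hgS₁.add hf₀diff
  have hfinal := integral_mono hIadd hgS₂ hpt
  rw [integral_add hgS₁ hf₀diff, hzero, add_zero] at hfinal
  exact hfinal


theorem euler_maruyama_step_convex_order {Ω : Type*} [MeasureSpace Ω]
    [IsProbabilityMeasure (ℙ : Measure Ω)]
    (θ a Δ μ : ℝ) (hθ : 0 < θ) (ha : 0 < a) (hΔ : 0 < Δ)
    (S₁ S₂ W : Ω → ℝ)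
    (hS₁ : Measurable S₁) (hS₂ : Measurable S₂) (hW : Measurable W)
    (hS₁int : Integrable S₁ ℙ) (hS₂int : Integrable S₂ ℙ)
    -- martingale coupling: `E[S₂ | S₁] = S₁` a.s.
    (hmart : ℙ[S₂ | MeasurableSpace.comap S₁ Real.measurableSpace] =ᵐ[ℙ] S₁)
    -- `W` is centered Gaussian with variance `Δ` …
    (hgauss : Measure.map W ℙ = gaussianReal 0 Δ.toNNReal)
    -- … and independent of `(S₁, S₂)`
    (hindep : IndepFun (fun ω => (S₁ ω, S₂ ω)) W ℙ) :
    -- for every convex `h : ℝ → ℝ` bounded below (lower bound `c`), the expectations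
    -- (well-defined in `(−∞, ∞]`, encoded by shifting by `c` and using `∫⁻`) are ordered
    ∀ (h : ℝ → ℝ), ConvexOn ℝ Set.univ h → ∀ c : ℝ, (∀ x, c ≤ h x) →
      ∫⁻ ω, ENNReal.ofReal
          (h (S₁ ω + Δ * (-θ * (S₁ ω - μ)) +
            Real.sqrt (2 * θ * a * ((S₁ ω) ^ 2 + 1)) * W ω) - c) ∂ℙ ≤
        ∫⁻ ω, ENNReal.ofReal
          (h (S₂ ω + Δ * (-θ * (S₂ ω - μ)) +
            Real.sqrt (2 * θ * a * ((S₂ ω) ^ 2 + 1)) * W ω) - c) ∂ℙ := by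
  intro h hconv c hc
  obtain ⟨g, hgconv, hgc, hglip, hgle, hgsup, hgmono⟩ := EM_approx hconv hc
  have hZ : ∀ (S : Ω → ℝ), Measurable S → Measurable (fun ω =>
      S ω + Δ * (-θ * (S ω - μ)) + Real.sqrt (2 * θ * a * ((S ω) ^ 2 + 1)) * W ω) := by
    intro S hS
    apply Measurable.add
    · exact hS.add (((hS.sub measurable_const).const_mul (-θ)).const_mul Δ)
    · exact (Real.continuous_sqrt.measurable.comp
        (((hS.pow_const 2).add_const 1).const_mul (2 * θ * a))).mul hW
  have hmeas : ∀ (n : ℕ) (S : Ω → ℝ), Measurable S → Measurable (fun ω =>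
      ENNReal.ofReal (g n (S ω + Δ * (-θ * (S ω - μ)) +
        Real.sqrt (2 * θ * a * ((S ω) ^ 2 + 1)) * W ω) - c)) := by
    intro n S hS
    exact (((hglip n).continuous.measurable.comp (hZ S hS)).sub
      measurable_const).ennreal_ofReal
  calc ∫⁻ ω, ENNReal.ofReal
        (h (S₁ ω + Δ * (-θ * (S₁ ω - μ)) +
          Real.sqrt (2 * θ * a * ((S₁ ω) ^ 2 + 1)) * W ω) - c) ∂ℙ
      = ∫⁻ ω, ⨆ n : ℕ, ENNReal.ofReal
        (g n (S₁ ω + Δ * (-θ * (S₁ ω - μ)) +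
          Real.sqrt (2 * θ * a * ((S₁ ω) ^ 2 + 1)) * W ω) - c) ∂ℙ :=
        lintegral_congr fun ω => (hgsup _).symm
    _ = ⨆ n : ℕ, ∫⁻ ω, ENNReal.ofReal
        (g n (S₁ ω + Δ * (-θ * (S₁ ω - μ)) +
          Real.sqrt (2 * θ * a * ((S₁ ω) ^ 2 + 1)) * W ω) - c) ∂ℙ := by
        refine lintegral_iSup (fun n => hmeas n S₁ hS₁) ?_
        intro n m hnm ω
        apply ENNReal.ofReal_le_ofReal
        have := hgmono (S₁ ω + Δ * (-θ * (S₁ ω - μ)) +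
          Real.sqrt (2 * θ * a * ((S₁ ω) ^ 2 + 1)) * W ω) hnm
        simp only at this
        linarith
    _ ≤ ∫⁻ ω, ENNReal.ofReal
        (h (S₂ ω + Δ * (-θ * (S₂ ω - μ)) +
          Real.sqrt (2 * θ * a * ((S₂ ω) ^ 2 + 1)) * W ω) - c) ∂ℙ := by
        refine iSup_le fun n => ?_
        refine (EM_main_lipschitz θ a Δ μ hθ ha hΔ S₁ S₂ W hS₁ hS₂ hW hS₁int hS₂int
          hmart hgauss hindep (g n) (hgconv n) c (hgc n) n (hglip n)).trans ?_
        refine lintegral_mono fun ω => ENNReal.ofReal_le_ofReal ?_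
        have := hgle n (S₂ ω + Δ * (-θ * (S₂ ω - μ)) +
          Real.sqrt (2 * θ * a * ((S₂ ω) ^ 2 + 1)) * W ω)
        linarith
end

section
/- Let θ > 0, a > 0, Δ > 0, μ ∈ ℝ and K ∈ ℕ, and let W₀, …, W_{K−1} be independent centered Gaussian random variables, each with variance Δ. For x ∈ ℝ define the Euler–Maruyama iterates Z₀(x) := x and Z_{j+1}(x) := Z_j(x) − Δ·θ·(Z_j(x) − μ) + √(2θa(Z_j(x)² + 1))·W_j for j = 0, …, K−1. Then for every convex function g : ℝ → ℝ of polynomial growth, the map x ↦ E[g(Z_K(x))] is a convex function of x ∈ ℝ. -/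
open MeasureTheory ProbabilityTheory Real
open scoped NNReal ENNReal

noncomputable section

namespace EMAux


def step (θ a Δ μ : ℝ) (z w : ℝ) : ℝ :=
  z - Δ * θ * (z - μ) + Real.sqrt (2 * θ * a * (z ^ 2 + 1)) * w

lemma continuous_step (θ a Δ μ : ℝ) :
    Continuous fun p : ℝ × ℝ => step θ a Δ μ p.1 p.2 := by
  unfold step; fun_prop

lemma convexOn_sqrt_sq_add_one : ConvexOn ℝ Set.univ (fun x : ℝ => Real.sqrt (x ^ 2 + 1)) := by
  refine ⟨convex_univ, fun x _ y _ t u ht hu htu => ?_⟩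
  have hx : (0:ℝ) ≤ x ^ 2 + 1 := by positivity
  have hy : (0:ℝ) ≤ y ^ 2 + 1 := by positivity
  have key : x * y + 1 ≤ Real.sqrt (x ^ 2 + 1) * Real.sqrt (y ^ 2 + 1) := by
    rw [← Real.sqrt_mul hx]
    calc x * y + 1 ≤ |x * y + 1| := le_abs_self _
      _ = Real.sqrt ((x * y + 1) ^ 2) := (Real.sqrt_sq_eq_abs _).symm
      _ ≤ Real.sqrt ((x ^ 2 + 1) * (y ^ 2 + 1)) :=
          Real.sqrt_le_sqrt (by nlinarith [sq_nonneg (x - y)])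
  have hsx := Real.sq_sqrt hx
  have hsy := Real.sq_sqrt hy
  have hsx0 := Real.sqrt_nonneg (x ^ 2 + 1)
  have hsy0 := Real.sqrt_nonneg (y ^ 2 + 1)
  have hrhs : 0 ≤ t * Real.sqrt (x ^ 2 + 1) + u * Real.sqrt (y ^ 2 + 1) := by positivity
  simp only [smul_eq_mul]
  have h2 : 2 * t * u * (x * y + 1) ≤
      2 * t * u * (Real.sqrt (x ^ 2 + 1) * Real.sqrt (y ^ 2 + 1)) := by
    apply mul_le_mul_of_nonneg_left key (by positivity)
  calc Real.sqrt ((t * x + u * y) ^ 2 + 1)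
      ≤ Real.sqrt ((t * Real.sqrt (x ^ 2 + 1) + u * Real.sqrt (y ^ 2 + 1)) ^ 2) :=
        Real.sqrt_le_sqrt (by
          have e1 : t ^ 2 * Real.sqrt (x ^ 2 + 1) ^ 2 = t ^ 2 * (x ^ 2 + 1) := by rw [hsx]
          have e2 : u ^ 2 * Real.sqrt (y ^ 2 + 1) ^ 2 = u ^ 2 * (y ^ 2 + 1) := by rw [hsy]
          have h3 : (t + u) ^ 2 = 1 := by rw [htu]; norm_num
          nlinarith [e1, e2, h2, h3])
    _ = t * Real.sqrt (x ^ 2 + 1) + u * Real.sqrt (y ^ 2 + 1) := Real.sqrt_sq hrhs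

lemma step_abs_bound {θ a Δ μ : ℝ} (hθ : 0 < θ) (ha : 0 < a) (hΔ : 0 < Δ) (z w : ℝ) :
    1 + |step θ a Δ μ z w| ≤
      (1 + |z|) * (1 + Δ * θ * (1 + |μ|) + Real.sqrt (2 * θ * a) * |w|) := by
  have h2 : (0:ℝ) ≤ 2 * θ * a := by positivity
  have h1 : Real.sqrt (2 * θ * a * (z ^ 2 + 1)) ≤ Real.sqrt (2 * θ * a) * (1 + |z|) := by
    rw [← Real.sqrt_sq (by positivity : (0:ℝ) ≤ 1 + |z|), ← Real.sqrt_mul h2]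
    apply Real.sqrt_le_sqrt
    have hz : z ^ 2 + 1 ≤ (1 + |z|) ^ 2 := by nlinarith [abs_nonneg z, sq_abs z]
    nlinarith [sq_nonneg (1 + |z|)]
  have hA : |z - Δ * θ * (z - μ)| ≤ |z| + Δ * θ * (|z| + |μ|) := by
    calc |z - Δ * θ * (z - μ)| ≤ |z| + |Δ * θ * (z - μ)| := abs_sub _ _
      _ = |z| + Δ * θ * |z - μ| := by rw [abs_mul, abs_of_nonneg (by positivity : (0:ℝ) ≤ Δ * θ)]
      _ ≤ |z| + Δ * θ * (|z| + |μ|) := by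
          gcongr
          exact abs_sub _ _
  have hB : |Real.sqrt (2 * θ * a * (z ^ 2 + 1)) * w| ≤ Real.sqrt (2 * θ * a) * (1 + |z|) * |w| := by
    rw [abs_mul, abs_of_nonneg (Real.sqrt_nonneg _)]
    exact mul_le_mul_of_nonneg_right h1 (abs_nonneg w)
  have htr : |step θ a Δ μ z w| ≤ |z - Δ * θ * (z - μ)| + |Real.sqrt (2 * θ * a * (z ^ 2 + 1)) * w| :=
    abs_add_le _ _
  have hw := abs_nonneg w
  have hz := abs_nonneg z
  have hm := abs_nonneg μ
  nlinarith [mul_nonneg (mul_nonneg hΔ.le hθ.le) (mul_nonneg hm hz),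
    mul_nonneg (Real.sqrt_nonneg (2*θ*a)) hw]



lemma integrable_one_add_abs_pow_mul_exp {b : ℝ} (hb : 0 < b) (n : ℕ) :
    Integrable (fun x : ℝ => (1 + |x|) ^ n * Real.exp (-b * x ^ 2)) := by
  have h2 : 0 < b / 2 := by positivity
  refine Integrable.mono' ((integrable_exp_neg_mul_sq h2).const_mul
    (Real.exp ((n : ℝ) ^ 2 / (2 * b)))) ?_ (ae_of_all _ fun x => ?_)
  · exact (((continuous_const.add continuous_abs).pow n).mul
      (by fun_prop : Continuous fun x : ℝ => Real.exp (-b * x ^ 2))).aestronglyMeasurable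
  · rw [Real.norm_eq_abs, abs_of_nonneg (by positivity)]
    have h1 : (1 + |x|) ^ n ≤ Real.exp ((n : ℝ) * |x|) := by
      calc (1 + |x|) ^ n ≤ Real.exp |x| ^ n :=
            pow_le_pow_left₀ (by positivity) (by linarith [Real.add_one_le_exp |x|]) n
        _ = Real.exp ((n : ℝ) * |x|) := by rw [← Real.exp_nat_mul]
    calc (1 + |x|) ^ n * Real.exp (-b * x ^ 2)
        ≤ Real.exp ((n : ℝ) * |x|) * Real.exp (-b * x ^ 2) :=
          mul_le_mul_of_nonneg_right h1 (Real.exp_pos _).le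
      _ = Real.exp ((n : ℝ) * |x| + -b * x ^ 2) := (Real.exp_add _ _).symm
      _ ≤ Real.exp ((n : ℝ) ^ 2 / (2 * b) + -(b / 2) * x ^ 2) := by
          apply Real.exp_le_exp.mpr
          have h2b : (0:ℝ) < 2 * b := by positivity
          have key2 : 2 * b * ((n:ℝ) * |x|) ≤ (n:ℝ) ^ 2 + b ^ 2 * x ^ 2 := by
            nlinarith [sq_nonneg (b * |x| - (n : ℝ)), sq_abs x]
          have key3 : (n:ℝ) * |x| ≤ ((n:ℝ) ^ 2 + b ^ 2 * x ^ 2) / (2 * b) :=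
            (le_div_iff₀ h2b).mpr (by linarith)
          have key4 : ((n:ℝ) ^ 2 + b ^ 2 * x ^ 2) / (2 * b) = (n:ℝ) ^ 2 / (2 * b) + (b / 2) * x ^ 2 := by
            field_simp
          linarith
      _ = Real.exp ((n : ℝ) ^ 2 / (2 * b)) * Real.exp (-(b / 2) * x ^ 2) := Real.exp_add _ _

lemma integrable_one_add_abs_pow_gaussian {v : ℝ≥0} (hv : v ≠ 0) (n : ℕ) :
    Integrable (fun w : ℝ => (1 + |w|) ^ n) (gaussianReal 0 v) := by
  have hv0 : (0:ℝ) < (v : ℝ) := by exact_mod_cast zero_lt_iff.mpr hv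
  rw [gaussianReal_of_var_ne_zero 0 hv, integrable_withDensity_iff (measurable_gaussianPDF 0 v)
    (ae_of_all _ fun x => ENNReal.ofReal_lt_top)]
  have hb : (0:ℝ) < (2 * (v:ℝ))⁻¹ := by positivity
  have heq : (fun x : ℝ => (1 + |x|) ^ n * (gaussianPDF 0 v x).toReal)
      = fun x => (Real.sqrt (2 * π * (v:ℝ)))⁻¹ *
          ((1 + |x|) ^ n * Real.exp (-(2 * (v:ℝ))⁻¹ * x ^ 2)) := by
    funext x
    rw [gaussianPDF, ENNReal.toReal_ofReal (gaussianPDFReal_nonneg _ _ _), gaussianPDFReal]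
    have harg : -(x - 0) ^ 2 / (2 * (v:ℝ)) = -(2 * (v:ℝ))⁻¹ * x ^ 2 := by
      field_simp; ring
    rw [harg]
    ring
  rw [heq]
  exact (integrable_one_add_abs_pow_mul_exp hb n).const_mul _



/-- polynomial growth bound -/
def Gr (n : ℕ) (C : ℝ) (g : ℝ → ℝ) : Prop := ∀ z, |g z| ≤ C * (1 + |z|) ^ n

def phi (Δ : ℝ) (g : ℝ → ℝ) (p : ℝ × ℝ) : ℝ :=
  ∫ w, g (p.1 + p.2 * w) ∂(gaussianReal 0 Δ.toNNReal)

def T (θ a Δ μ : ℝ) (g : ℝ → ℝ) (x : ℝ) : ℝ :=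
  ∫ w, g (step θ a Δ μ x w) ∂(gaussianReal 0 Δ.toNNReal)

variable {θ a Δ μ : ℝ} {n : ℕ} {C : ℝ} {g : ℝ → ℝ}

lemma toNNReal_ne_zero (hΔ : 0 < Δ) : Δ.toNNReal ≠ 0 := by
  simp [Real.toNNReal_eq_zero, not_le, hΔ]

lemma Gr.nonneg (hgr : Gr n C g) : 0 ≤ C :=
  le_trans (abs_nonneg (g 0)) (by simpa using hgr 0)

lemma integrable_affine (hΔ : 0 < Δ) (hgc : Continuous g) (hgr : Gr n C g) (p : ℝ × ℝ) :
    Integrable (fun w => g (p.1 + p.2 * w)) (gaussianReal 0 Δ.toNNReal) := by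
  have hint := integrable_one_add_abs_pow_gaussian (toNNReal_ne_zero hΔ) n
  have hC : 0 ≤ C := hgr.nonneg
  refine (hint.const_mul (C * (1 + |p.1| + |p.2|) ^ n)).mono'
    ((hgc.comp (by fun_prop : Continuous fun w : ℝ => p.1 + p.2 * w)).aestronglyMeasurable)
    (ae_of_all _ fun w => ?_)
  rw [Real.norm_eq_abs]
  have h1 : |p.1 + p.2 * w| ≤ |p.1| + |p.2| * |w| := by
    rw [← abs_mul]; exact abs_add_le _ _
  calc |g (p.1 + p.2 * w)| ≤ C * (1 + |p.1 + p.2 * w|) ^ n := hgr _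
    _ ≤ C * ((1 + |p.1| + |p.2|) * (1 + |w|)) ^ n := by
        apply mul_le_mul_of_nonneg_left _ hC
        apply pow_le_pow_left₀ (by positivity)
        nlinarith [abs_nonneg p.1, abs_nonneg p.2, abs_nonneg w, mul_nonneg (abs_nonneg p.1) (abs_nonneg w)]
    _ = C * (1 + |p.1| + |p.2|) ^ n * (1 + |w|) ^ n := by rw [mul_pow]; ring

lemma phi_convexOn (hΔ : 0 < Δ) (hg : ConvexOn ℝ Set.univ g) (hgc : Continuous g)
    (hgr : Gr n C g) : ConvexOn ℝ Set.univ (phi Δ g) := by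
  refine ⟨convex_univ, fun p _ q _ t u ht hu htu => ?_⟩
  have hint := integrable_affine (n := n) (C := C) hΔ hgc hgr
  have heq : ∀ w : ℝ, (t • p + u • q).1 + (t • p + u • q).2 * w
      = t * (p.1 + p.2 * w) + u * (q.1 + q.2 * w) := by
    intro w; simp [Prod.smul_fst, Prod.smul_snd, smul_eq_mul]; ring
  have hL : phi Δ g (t • p + u • q)
      = ∫ w, g (t * (p.1 + p.2 * w) + u * (q.1 + q.2 * w)) ∂(gaussianReal 0 Δ.toNNReal) := by
    unfold phi; congr 1; funext w; rw [heq]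
  rw [hL]
  have hLe : ∀ w : ℝ, g (t * (p.1 + p.2 * w) + u * (q.1 + q.2 * w))
      ≤ t * g (p.1 + p.2 * w) + u * g (q.1 + q.2 * w) := fun w => by
    simpa [smul_eq_mul] using hg.2 (Set.mem_univ (p.1 + p.2 * w)) (Set.mem_univ (q.1 + q.2 * w)) ht hu htu
  calc (∫ w, g (t * (p.1 + p.2 * w) + u * (q.1 + q.2 * w)) ∂(gaussianReal 0 Δ.toNNReal))
      ≤ ∫ w, (t * g (p.1 + p.2 * w) + u * g (q.1 + q.2 * w)) ∂(gaussianReal 0 Δ.toNNReal) := by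
        refine integral_mono ?_ (((hint p).const_mul t).add ((hint q).const_mul u)) hLe
        have := hint (t • p + u • q)
        simpa only [heq] using this
    _ = t • phi Δ g p + u • phi Δ g q := by
        rw [integral_add ((hint p).const_mul t) ((hint q).const_mul u),
          integral_const_mul, integral_const_mul]
        simp [phi, smul_eq_mul]

lemma phi_neg_snd (hΔ : 0 < Δ) (hgc : Continuous g) (α β : ℝ) :
    phi Δ g (α, -β) = phi Δ g (α, β) := by
  have h := gaussianReal_map_const_mul (μ := 0) (v := Δ.toNNReal) (-1)
  have h1 : (⟨(-1:ℝ) ^ 2, sq_nonneg _⟩ : ℝ≥0) = 1 := by ext; norm_num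
  replace h : Measure.map (fun x : ℝ => -1 * x) (gaussianReal 0 Δ.toNNReal) = gaussianReal 0 Δ.toNNReal := by
    rw [h]; congr 1
    · ring
    · ext; simp
  have key : (∫ w, g (α + β * w) ∂(gaussianReal 0 Δ.toNNReal))
      = ∫ w, g (α + β * (-1 * w)) ∂(gaussianReal 0 Δ.toNNReal) := by
    conv_lhs => rw [← h]
    exact integral_map (by fun_prop)
      ((hgc.comp (by fun_prop : Continuous fun w : ℝ => α + β * w)).aestronglyMeasurable)
  show (∫ w, g (α + -β * w) ∂(gaussianReal 0 Δ.toNNReal))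
      = ∫ w, g (α + β * w) ∂(gaussianReal 0 Δ.toNNReal)
  rw [key]; congr 1; funext w; ring_nf

lemma phi_mono_snd (hΔ : 0 < Δ) (hg : ConvexOn ℝ Set.univ g) (hgc : Continuous g)
    (hgr : Gr n C g) {α β β' : ℝ} (hβ : 0 ≤ β) (hββ' : β ≤ β') :
    phi Δ g (α, β) ≤ phi Δ g (α, β') := by
  rcases eq_or_lt_of_le (hβ.trans hββ') with h0 | h0
  · have hb : β = 0 := le_antisymm (hββ'.trans h0.ge) hβ
    rw [hb, ← h0]
  · set t : ℝ := (β' + β) / (2 * β') with hts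
    have ht : 0 ≤ t := by positivity
    have hu : 0 ≤ 1 - t := by
      rw [sub_nonneg, hts, div_le_one (by positivity)]
      linarith
    have hpt : t • ((α, β') : ℝ × ℝ) + (1 - t) • ((α, -β') : ℝ × ℝ) = (α, β) := by
      rw [Prod.smul_mk, Prod.smul_mk, Prod.mk_add_mk]
      refine Prod.ext ?_ ?_ <;> simp only [smul_eq_mul]
      · ring
      · have hne : β' ≠ 0 := ne_of_gt h0
        have h2 : t * β' + (1 - t) * -β' = (2 * t - 1) * β' := by ring
        rw [h2, hts]
        field_simp
        ring
    have key := (phi_convexOn hΔ hg hgc hgr).2 (Set.mem_univ ((α, β') : ℝ × ℝ))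
      (Set.mem_univ ((α, -β') : ℝ × ℝ)) ht hu (by ring)
    rw [hpt] at key
    calc phi Δ g (α, β) ≤ t • phi Δ g (α, β') + (1 - t) • phi Δ g (α, -β') := key
      _ = phi Δ g (α, β') := by
          rw [phi_neg_snd hΔ hgc]; simp only [smul_eq_mul]; ring


lemma integrable_kernel_pow (hθ : 0 < θ) (ha : 0 < a) (hΔ : 0 < Δ) (n : ℕ) :
    Integrable (fun w : ℝ => (1 + Δ * θ * (1 + |μ|) + Real.sqrt (2 * θ * a) * |w|) ^ n)
      (gaussianReal 0 Δ.toNNReal) := by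
  have hint := integrable_one_add_abs_pow_gaussian (toNNReal_ne_zero hΔ) n
  refine (hint.const_mul ((1 + Δ * θ * (1 + |μ|) + Real.sqrt (2 * θ * a)) ^ n)).mono'
    (((continuous_const.add (continuous_const.mul continuous_abs)).pow n).aestronglyMeasurable)
    (ae_of_all _ fun w => ?_)
  rw [Real.norm_eq_abs, abs_of_nonneg (by positivity), ← mul_pow]
  apply pow_le_pow_left₀ (by positivity)
  nlinarith [abs_nonneg w, Real.sqrt_nonneg (2 * θ * a),
    mul_nonneg (by positivity : (0:ℝ) ≤ 1 + Δ * θ * (1 + |μ|)) (abs_nonneg w)]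

lemma T_growth (hθ : 0 < θ) (ha : 0 < a) (hΔ : 0 < Δ) (hgc : Continuous g) (hgr : Gr n C g) :
    Gr n (C * ∫ w, (1 + Δ * θ * (1 + |μ|) + Real.sqrt (2 * θ * a) * |w|) ^ n
      ∂(gaussianReal 0 Δ.toNNReal)) (T θ a Δ μ g) := by
  intro x
  have hC : 0 ≤ C := hgr.nonneg
  have hker := integrable_kernel_pow (θ := θ) (a := a) (Δ := Δ) (μ := μ) hθ ha hΔ n
  have hbound : ∀ w, ‖g (step θ a Δ μ x w)‖ ≤ (C * (1 + |x|) ^ n) *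
      (1 + Δ * θ * (1 + |μ|) + Real.sqrt (2 * θ * a) * |w|) ^ n := fun w => by
    rw [Real.norm_eq_abs]
    calc |g (step θ a Δ μ x w)| ≤ C * (1 + |step θ a Δ μ x w|) ^ n := hgr _
      _ ≤ C * ((1 + |x|) * (1 + Δ * θ * (1 + |μ|) + Real.sqrt (2 * θ * a) * |w|)) ^ n := by
          apply mul_le_mul_of_nonneg_left _ hC
          exact pow_le_pow_left₀ (by positivity) (step_abs_bound hθ ha hΔ x w) n
      _ = (C * (1 + |x|) ^ n) *
          (1 + Δ * θ * (1 + |μ|) + Real.sqrt (2 * θ * a) * |w|) ^ n := by rw [mul_pow]; ring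
  have h1 : ‖T θ a Δ μ g x‖ ≤ ∫ w, (C * (1 + |x|) ^ n) *
      (1 + Δ * θ * (1 + |μ|) + Real.sqrt (2 * θ * a) * |w|) ^ n ∂(gaussianReal 0 Δ.toNNReal) :=
    norm_integral_le_of_norm_le (hker.const_mul _) (ae_of_all _ hbound)
  rw [integral_const_mul, Real.norm_eq_abs] at h1
  have h2 : C * (1 + |x|) ^ n * ∫ w, (1 + Δ * θ * (1 + |μ|) + Real.sqrt (2 * θ * a) * |w|) ^ n
      ∂(gaussianReal 0 Δ.toNNReal)
      = (C * ∫ w, (1 + Δ * θ * (1 + |μ|) + Real.sqrt (2 * θ * a) * |w|) ^ n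
        ∂(gaussianReal 0 Δ.toNNReal)) * (1 + |x|) ^ n := by ring
  linarith [h1, h2.le, h2.ge]

lemma T_convexOn (hθ : 0 < θ) (ha : 0 < a) (hΔ : 0 < Δ) (hg : ConvexOn ℝ Set.univ g)
    (hgc : Continuous g) (hgr : Gr n C g) : ConvexOn ℝ Set.univ (T θ a Δ μ g) := by
  refine ⟨convex_univ, fun x _ y _ t u ht hu htu => ?_⟩
  simp only [smul_eq_mul]
  have h2 : (0:ℝ) ≤ 2 * θ * a := by positivity
  have hs_eq : ∀ z : ℝ, Real.sqrt (2 * θ * a * (z ^ 2 + 1))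
      = Real.sqrt (2 * θ * a) * Real.sqrt (z ^ 2 + 1) := fun z => Real.sqrt_mul h2 _
  have hs_conv : Real.sqrt (2 * θ * a * ((t * x + u * y) ^ 2 + 1))
      ≤ t * Real.sqrt (2 * θ * a * (x ^ 2 + 1)) + u * Real.sqrt (2 * θ * a * (y ^ 2 + 1)) := by
    rw [hs_eq, hs_eq, hs_eq]
    have hcs := convexOn_sqrt_sq_add_one.2 (Set.mem_univ x) (Set.mem_univ y) ht hu htu
    simp only [smul_eq_mul] at hcs
    calc Real.sqrt (2 * θ * a) * Real.sqrt ((t * x + u * y) ^ 2 + 1)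
        ≤ Real.sqrt (2 * θ * a) * (t * Real.sqrt (x ^ 2 + 1) + u * Real.sqrt (y ^ 2 + 1)) :=
          mul_le_mul_of_nonneg_left hcs (Real.sqrt_nonneg _)
      _ = t * (Real.sqrt (2 * θ * a) * Real.sqrt (x ^ 2 + 1))
          + u * (Real.sqrt (2 * θ * a) * Real.sqrt (y ^ 2 + 1)) := by ring
  have hmono := phi_mono_snd hΔ hg hgc hgr
    (α := t * x + u * y - Δ * θ * (t * x + u * y - μ)) (Real.sqrt_nonneg _) hs_conv
  have hpt : t • ((x - Δ * θ * (x - μ), Real.sqrt (2 * θ * a * (x ^ 2 + 1))) : ℝ × ℝ)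
      + u • ((y - Δ * θ * (y - μ), Real.sqrt (2 * θ * a * (y ^ 2 + 1))) : ℝ × ℝ)
      = (t * x + u * y - Δ * θ * (t * x + u * y - μ),
          t * Real.sqrt (2 * θ * a * (x ^ 2 + 1)) + u * Real.sqrt (2 * θ * a * (y ^ 2 + 1))) := by
    rw [Prod.smul_mk, Prod.smul_mk, Prod.mk_add_mk]
    refine Prod.ext ?_ ?_
    · simp only [smul_eq_mul]; linear_combination (Δ * θ * μ) * htu
    · simp only [smul_eq_mul]
  have hconv := (phi_convexOn hΔ hg hgc hgr).2
    (Set.mem_univ ((x - Δ * θ * (x - μ), Real.sqrt (2 * θ * a * (x ^ 2 + 1))) : ℝ × ℝ))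
    (Set.mem_univ ((y - Δ * θ * (y - μ), Real.sqrt (2 * θ * a * (y ^ 2 + 1))) : ℝ × ℝ))
    ht hu htu
  rw [hpt] at hconv
  simp only [smul_eq_mul] at hconv
  exact le_trans hmono hconv



def zeta (θ a Δ μ : ℝ) (K : ℕ) : ℕ → ℝ → (Fin K → ℝ) → ℝ
  | 0, x, _ => x
  | j + 1, x, v =>
    if h : j < K then step θ a Δ μ (zeta θ a Δ μ K j x v) (v ⟨j, h⟩)
    else zeta θ a Δ μ K j x v

lemma measurable_zeta (θ a Δ μ : ℝ) (K : ℕ) (j : ℕ) (x : ℝ) :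
    Measurable (zeta θ a Δ μ K j x) := by
  induction j with
  | zero => exact measurable_const
  | succ j ih =>
    by_cases h : j < K
    · simp only [zeta, dif_pos h]
      exact (continuous_step θ a Δ μ).measurable.comp (ih.prodMk (measurable_pi_apply _))
    · simpa only [zeta, dif_neg h] using ih

lemma zeta_local (θ a Δ μ : ℝ) (K : ℕ) (j : ℕ) (x : ℝ) :
    ∀ v v' : Fin K → ℝ, (∀ i : Fin K, (i : ℕ) < j → v i = v' i) →
    zeta θ a Δ μ K j x v = zeta θ a Δ μ K j x v' := by
  induction j with
  | zero => intro v v' _; rfl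
  | succ j ih =>
    intro v v' hvv
    have ih' := ih v v' (fun i hi => hvv i (Nat.lt_succ_of_lt hi))
    by_cases h : j < K
    · simp only [zeta, dif_pos h, ih', hvv ⟨j, h⟩ (Nat.lt_succ_self j)]
    · simpa only [zeta, dif_neg h] using ih'

end EMAux

theorem euler_maruyama_propagation_of_convexity {Ω : Type*} [MeasureSpace Ω]
    [IsProbabilityMeasure (ℙ : Measure Ω)]
    (θ a Δ μ : ℝ) (hθ : 0 < θ) (ha : 0 < a) (hΔ : 0 < Δ)
    (K : ℕ)
    (W : Fin K → Ω → ℝ)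
    (hWmeas : ∀ k, Measurable (W k))
    -- `W₀, …, W_{K−1}` are independent …
    (hindep : iIndepFun W ℙ)
    -- … centered Gaussians, each with variance `Δ`
    (hgauss : ∀ k, Measure.map (W k) ℙ = gaussianReal 0 Δ.toNNReal)
    -- the Euler–Maruyama iterates started at `x`
    (Z : ℕ → ℝ → Ω → ℝ)
    (hZ0 : ∀ (x : ℝ) (ω : Ω), Z 0 x ω = x)
    (hZrec : ∀ (j : Fin K) (x : ℝ) (ω : Ω),
      Z (j + 1) x ω = Z j x ω - Δ * θ * (Z j x ω - μ) +
        Real.sqrt (2 * θ * a * ((Z j x ω) ^ 2 + 1)) * W j ω) :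
    -- for every convex `g` of polynomial growth, `x ↦ E[g(Z_K(x))]` is convex
    ∀ g : ℝ → ℝ, ConvexOn ℝ Set.univ g →
      (∃ C m : ℝ, ∀ z : ℝ, |g z| ≤ C * (1 + |z| ^ m)) →
      ConvexOn ℝ Set.univ (fun x : ℝ => ∫ ω, g (Z K x ω) ∂ℙ) := by
  classical
  intro g hgconv hpoly
  have hgc : Continuous g := continuousOn_univ.mp (hgconv.continuousOn isOpen_univ)
  -- convert the growth hypothesis into the `Gr` form
  obtain ⟨n, C, hgr⟩ : ∃ (n : ℕ) (C : ℝ), EMAux.Gr n C g := by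
    obtain ⟨C0, m, hgm⟩ := hpoly
    obtain ⟨B, hB⟩ := isCompact_Icc.exists_bound_of_continuousOn
      (hgc.continuousOn (s := Set.Icc (-1:ℝ) 1))
    have hC0 : 0 ≤ C0 := by
      have h0 := (abs_nonneg (g 0)).trans (hgm 0)
      have h1 : (0:ℝ) ≤ |(0:ℝ)| ^ m := Real.rpow_nonneg (abs_nonneg (0:ℝ)) m
      nlinarith
    refine ⟨⌈m⌉₊, 2 * C0 + |B| + 1, fun z => ?_⟩
    have h1n : (1:ℝ) ≤ (1 + |z|) ^ ⌈m⌉₊ := one_le_pow₀ (by linarith [abs_nonneg z])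
    rcases le_or_gt (|z|) 1 with hz | hz
    · have hmem : z ∈ Set.Icc (-1:ℝ) 1 := by
        rcases abs_le.mp hz with ⟨h1, h2⟩; exact ⟨h1, h2⟩
      have hBz : |g z| ≤ B := by simpa [Real.norm_eq_abs] using hB z hmem
      nlinarith [le_abs_self B, abs_nonneg B]
    · have h2 : |z| ^ m ≤ |z| ^ ((⌈m⌉₊ : ℝ)) :=
        Real.rpow_le_rpow_of_exponent_le hz.le (Nat.le_ceil m)
      have h3 : |z| ^ ((⌈m⌉₊ : ℝ)) = |z| ^ ⌈m⌉₊ := Real.rpow_natCast _ _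
      have h4 : |z| ^ ⌈m⌉₊ ≤ (1 + |z|) ^ ⌈m⌉₊ :=
        pow_le_pow_left₀ (abs_nonneg z) (by linarith) _
      have h5 : |z| ^ m ≤ (1 + |z|) ^ ⌈m⌉₊ := by rw [h3] at h2; linarith
      calc |g z| ≤ C0 * (1 + |z| ^ m) := hgm z
        _ ≤ (2 * C0 + |B| + 1) * (1 + |z|) ^ ⌈m⌉₊ := by nlinarith [abs_nonneg B]
  -- the deterministic recursion evaluates the iterates
  have hζeq : ∀ (j : ℕ), j ≤ K → ∀ (x : ℝ) (ω : Ω),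
      Z j x ω = EMAux.zeta θ a Δ μ K j x (fun i => W i ω) := by
    intro j
    induction j with
    | zero => intro _ x ω; rw [hZ0]; rfl
    | succ j ih =>
      intro hj x ω
      have hjK : j < K := hj
      rw [show Z (j + 1) x ω
          = EMAux.step θ a Δ μ (Z j x ω) (W ⟨j, hjK⟩ ω) from hZrec ⟨j, hjK⟩ x ω,
        ih hjK.le x ω]
      simp only [EMAux.zeta, dif_pos hjK]
  have hZmeas : ∀ j, j ≤ K → ∀ x, Measurable (Z j x) := by
    intro j hj x
    have he : Z j x = fun ω => EMAux.zeta θ a Δ μ K j x (fun i => W i ω) :=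
      funext (hζeq j hj x)
    rw [he]
    exact (EMAux.measurable_zeta θ a Δ μ K j x).comp (measurable_pi_lambda _ hWmeas)
  -- independence of `Z j x` and `W j`
  have hindepZ : ∀ (j : Fin K) (x : ℝ), IndepFun (Z j x) (W j) ℙ := by
    intro j x
    have hbase := hindep.indepFun_finset (Finset.Iio j) {j}
      (by simp [Finset.disjoint_left]; exact fun _ h => ne_of_lt h) hWmeas
    set φ : (↥(Finset.Iio j) → ℝ) → ℝ := fun u =>
      EMAux.zeta θ a Δ μ K j x
        (fun i => if hi : i ∈ Finset.Iio j then u ⟨i, hi⟩ else 0) with hφdef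
    have hφ : Measurable φ := by
      apply (EMAux.measurable_zeta θ a Δ μ K j x).comp
      apply measurable_pi_lambda
      intro i
      by_cases hi : i ∈ Finset.Iio j
      · simpa only [dif_pos hi] using measurable_pi_apply (⟨i, hi⟩ : ↥(Finset.Iio j))
      · simpa only [dif_neg hi] using
          (measurable_const : Measurable fun _ : ↥(Finset.Iio j) → ℝ => (0:ℝ))
    have hψ : Measurable fun u : (↥({j} : Finset (Fin K)) → ℝ) =>
        u ⟨j, Finset.mem_singleton_self j⟩ := measurable_pi_apply _
    have h2 := hbase.comp hφ hψ
    have e1 : (φ ∘ fun ω (i : ↥(Finset.Iio j)) => W i ω) = Z ↑j x := by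
      funext ω
      show EMAux.zeta θ a Δ μ K ↑j x _ = Z ↑j x ω
      rw [hζeq ↑j j.isLt.le x ω]
      apply EMAux.zeta_local
      intro i hi
      have hij : i ∈ Finset.Iio j := Finset.mem_Iio.mpr (Fin.lt_def.mpr hi)
      rw [dif_pos hij]
    have e2 : ((fun u : (↥({j} : Finset (Fin K)) → ℝ) =>
        u ⟨j, Finset.mem_singleton_self j⟩) ∘
        fun ω (i : ↥({j} : Finset (Fin K))) => W i ω) = W j := rfl
    rw [e1, e2] at h2
    exact h2
  -- all moments of the iterates are finite
  have hmom : ∀ (j : ℕ), j ≤ K → ∀ (x : ℝ) (nn : ℕ),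
      Integrable (fun ω => (1 + |Z j x ω|) ^ nn) ℙ := by
    intro j
    induction j with
    | zero =>
      intro _ x nn
      have he : (fun ω => (1 + |Z 0 x ω|) ^ nn) = fun _ => (1 + |x|) ^ nn := by
        funext ω; rw [hZ0]
      rw [he]; exact integrable_const _
    | succ j ih =>
      intro hj x nn
      have hjK : j < K := hj
      have hWint : Integrable (fun ω =>
          (1 + Δ * θ * (1 + |μ|) + Real.sqrt (2 * θ * a) * |W ⟨j, hjK⟩ ω|) ^ nn) ℙ := by
        have hg1 := EMAux.integrable_kernel_pow (θ := θ) (a := a) (Δ := Δ) (μ := μ) hθ ha hΔ nn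
        rw [← hgauss ⟨j, hjK⟩] at hg1
        exact (integrable_map_measure hg1.aestronglyMeasurable
          (hWmeas ⟨j, hjK⟩).aemeasurable).mp hg1
      have hZWindep := (hindepZ ⟨j, hjK⟩ x).comp
        (show Measurable fun z : ℝ => (1 + |z|) ^ nn by fun_prop)
        (show Measurable fun w : ℝ =>
          (1 + Δ * θ * (1 + |μ|) + Real.sqrt (2 * θ * a) * |w|) ^ nn by fun_prop)
      have hprod : Integrable (fun ω => (1 + |Z j x ω|) ^ nn *
          (1 + Δ * θ * (1 + |μ|) + Real.sqrt (2 * θ * a) * |W ⟨j, hjK⟩ ω|) ^ nn) ℙ :=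
        hZWindep.integrable_mul (ih hjK.le x nn) hWint
      refine hprod.mono' ?_ (ae_of_all _ fun ω => ?_)
      · exact ((measurable_const.add (hZmeas (j+1) hj x).abs).pow_const nn).aestronglyMeasurable
      · rw [Real.norm_eq_abs, abs_of_nonneg (by positivity),
          show Z (j + 1) x ω
            = EMAux.step θ a Δ μ (Z j x ω) (W ⟨j, hjK⟩ ω) from hZrec ⟨j, hjK⟩ x ω]
        calc (1 + |EMAux.step θ a Δ μ (Z j x ω) (W ⟨j, hjK⟩ ω)|) ^ nn
            ≤ ((1 + |Z j x ω|) * (1 + Δ * θ * (1 + |μ|)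
              + Real.sqrt (2 * θ * a) * |W ⟨j, hjK⟩ ω|)) ^ nn :=
              pow_le_pow_left₀ (by positivity) (EMAux.step_abs_bound hθ ha hΔ _ _) nn
          _ = _ := mul_pow _ _ nn
  -- one-step identity
  have hstep1 : ∀ (j : ℕ) (hjK : j < K) (x : ℝ) (g' : ℝ → ℝ) (n' : ℕ) (C' : ℝ),
      ConvexOn ℝ Set.univ g' → Continuous g' → EMAux.Gr n' C' g' →
      ∫ ω, g' (Z (j + 1) x ω) ∂ℙ = ∫ ω, (EMAux.T θ a Δ μ g') (Z j x ω) ∂ℙ := by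
    intro j hjK x g' n' C' hg'conv hg'c hg'r
    have hX : Measurable (Z j x) := hZmeas j hjK.le x
    haveI hPX : IsProbabilityMeasure (Measure.map (Z j x) ℙ) :=
      Measure.isProbabilityMeasure_map hX.aemeasurable
    have hpair : Measure.map (fun ω => (Z j x ω, W ⟨j, hjK⟩ ω)) ℙ
        = (Measure.map (Z j x) ℙ).prod (gaussianReal 0 Δ.toNNReal) := by
      rw [← hgauss ⟨j, hjK⟩]
      exact (indepFun_iff_map_prod_eq_prod_map_map hX.aemeasurable
        (hWmeas ⟨j, hjK⟩).aemeasurable).mp (hindepZ ⟨j, hjK⟩ x)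
    have hh : Continuous fun p : ℝ × ℝ => g' (EMAux.step θ a Δ μ p.1 p.2) :=
      hg'c.comp (EMAux.continuous_step θ a Δ μ)
    have hC' : 0 ≤ C' := hg'r.nonneg
    have hTconv := EMAux.T_convexOn (μ := μ) hθ ha hΔ hg'conv hg'c hg'r
    have hTc : Continuous (EMAux.T θ a Δ μ g') :=
      continuousOn_univ.mp (hTconv.continuousOn isOpen_univ)
    have hint : Integrable (fun p : ℝ × ℝ => g' (EMAux.step θ a Δ μ p.1 p.2))
        ((Measure.map (Z j x) ℙ).prod (gaussianReal 0 Δ.toNNReal)) := by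
      have hf1 : Integrable (fun z : ℝ => C' * (1 + |z|) ^ n') (Measure.map (Z j x) ℙ) := by
        have h1 : Integrable (fun z : ℝ => (1 + |z|) ^ n') (Measure.map (Z j x) ℙ) := by
          rw [integrable_map_measure
            (by fun_prop : Continuous fun z : ℝ => (1 + |z|) ^ n').aestronglyMeasurable
            hX.aemeasurable]
          exact hmom j hjK.le x n'
        exact h1.const_mul _
      have hf2 := EMAux.integrable_kernel_pow (θ := θ) (a := a) (Δ := Δ) (μ := μ) hθ ha hΔ n'
      refine (hf1.mul_prod hf2).mono' hh.aestronglyMeasurable (ae_of_all _ fun p => ?_)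
      rw [Real.norm_eq_abs]
      calc |g' (EMAux.step θ a Δ μ p.1 p.2)|
          ≤ C' * (1 + |EMAux.step θ a Δ μ p.1 p.2|) ^ n' := hg'r _
        _ ≤ C' * ((1 + |p.1|) * (1 + Δ * θ * (1 + |μ|)
            + Real.sqrt (2 * θ * a) * |p.2|)) ^ n' :=
            mul_le_mul_of_nonneg_left
              (pow_le_pow_left₀ (by positivity) (EMAux.step_abs_bound hθ ha hΔ _ _) _) hC'
        _ = (C' * (1 + |p.1|) ^ n') * (1 + Δ * θ * (1 + |μ|)
            + Real.sqrt (2 * θ * a) * |p.2|) ^ n' := by rw [mul_pow]; ring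
    calc ∫ ω, g' (Z (j + 1) x ω) ∂ℙ
        = ∫ ω, g' (EMAux.step θ a Δ μ (Z j x ω) (W ⟨j, hjK⟩ ω)) ∂ℙ := by
          congr 1; funext ω; exact congrArg g' (hZrec ⟨j, hjK⟩ x ω)
      _ = ∫ p, g' (EMAux.step θ a Δ μ p.1 p.2)
            ∂(Measure.map (fun ω => (Z j x ω, W ⟨j, hjK⟩ ω)) ℙ) :=
          (integral_map (hX.aemeasurable.prodMk (hWmeas ⟨j, hjK⟩).aemeasurable)
            hh.aestronglyMeasurable).symm
      _ = ∫ p, g' (EMAux.step θ a Δ μ p.1 p.2)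
            ∂((Measure.map (Z j x) ℙ).prod (gaussianReal 0 Δ.toNNReal)) := by rw [hpair]
      _ = ∫ z, ∫ w, g' (EMAux.step θ a Δ μ z w) ∂(gaussianReal 0 Δ.toNNReal)
            ∂(Measure.map (Z j x) ℙ) := integral_prod _ hint
      _ = ∫ z, EMAux.T θ a Δ μ g' z ∂(Measure.map (Z j x) ℙ) := rfl
      _ = ∫ ω, EMAux.T θ a Δ μ g' (Z j x ω) ∂ℙ :=
          integral_map hX.aemeasurable hTc.aestronglyMeasurable
  -- the K-step iteration identity
  have hiter : ∀ (j : ℕ), j ≤ K → ∀ (g' : ℝ → ℝ) (n' : ℕ) (C' : ℝ),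
      ConvexOn ℝ Set.univ g' → Continuous g' → EMAux.Gr n' C' g' →
      ∀ x, ∫ ω, g' (Z j x ω) ∂ℙ = (EMAux.T θ a Δ μ)^[j] g' x := by
    intro j
    induction j with
    | zero =>
      intro _ g' n' C' _ _ _ x
      simp only [Function.iterate_zero, id_eq]
      have he : (fun ω => g' (Z 0 x ω)) = fun _ => g' x := by funext ω; rw [hZ0]
      rw [he, integral_const]
      simp
    | succ j ih =>
      intro hj g' n' C' hg'conv hg'c hg'r x
      have hjK : j < K := hj
      have h1 := hstep1 j hjK x g' n' C' hg'conv hg'c hg'r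
      have hTconv := EMAux.T_convexOn (μ := μ) hθ ha hΔ hg'conv hg'c hg'r
      have hTc : Continuous (EMAux.T θ a Δ μ g') :=
        continuousOn_univ.mp (hTconv.continuousOn isOpen_univ)
      have hTgr := EMAux.T_growth (μ := μ) hθ ha hΔ hg'c hg'r
      rw [h1, ih hjK.le _ _ _ hTconv hTc hTgr x, ← Function.iterate_succ_apply]
  -- convexity (and growth) propagates through the iterates of `T`
  have hclass : ∀ j : ℕ, ConvexOn ℝ Set.univ ((EMAux.T θ a Δ μ)^[j] g) ∧
      Continuous ((EMAux.T θ a Δ μ)^[j] g) ∧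
      ∃ C' : ℝ, EMAux.Gr n C' ((EMAux.T θ a Δ μ)^[j] g) := by
    intro j
    induction j with
    | zero =>
      refine ⟨by simpa using hgconv, by simpa using hgc, C, by simpa using hgr⟩
    | succ j ih =>
      obtain ⟨ih1, ih2, C', ih3⟩ := ih
      rw [Function.iterate_succ_apply']
      have h1 := EMAux.T_convexOn (μ := μ) hθ ha hΔ ih1 ih2 ih3
      exact ⟨h1, continuousOn_univ.mp (h1.continuousOn isOpen_univ),
        _, EMAux.T_growth (μ := μ) hθ ha hΔ ih2 ih3⟩
  have hfinal : (fun x : ℝ => ∫ ω, g (Z K x ω) ∂ℙ) = (EMAux.T θ a Δ μ)^[K] g := by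
    funext x
    exact hiter K le_rfl g n C hgconv hgc hgr x
  rw [hfinal]
  exact (hclass K).1
end
end
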